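/- arXiv:2104.12216 — 5 statements merged into one kernel-verified Lean document; each statement's English description precedes it below -/
import Mathlib

section
/- For positive reals μ, μ' and t ∈ [0,1), the regularized incomplete beta function has the hypergeometric series representation I(μ,μ';t) = (t^μ/(μ B(μ,μ'))) · Σ_{k=0}^∞ (1−μ')_k (μ)_k / ((μ+1)_k k!) · t^k, and this series also converges and the identity holds at t = 1. -/
open MeasureTheory

/-- The beta function `B(a,b) = ∫₀¹ s^(a-1) (1-s)^(b-1) ds`. -/
noncomputable def betaFn (a b : ℝ) : ℝ := ∫ s in (0:ℝ)..1, s ^ (a - 1) * (1 - s) ^ (b - 1)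

/-- The regularized incomplete beta function `I(a,b;t)`. -/
noncomputable def regIncBeta (a b t : ℝ) : ℝ :=
  (betaFn a b)⁻¹ * ∫ s in (0:ℝ)..t, s ^ (a - 1) * (1 - s) ^ (b - 1)

/-- `ℬ(λ,λ',μ,μ',ν,ν') = (1/B(λ,λ')) ∫₀¹ t^(λ-1)(1-t)^(λ'-1) I(μ,μ';t) I(ν,ν';t) dt`. -/
noncomputable def calB (l l' m m' n n' : ℝ) : ℝ :=
  (betaFn l l')⁻¹ * ∫ t in (0:ℝ)..1,
    t ^ (l - 1) * (1 - t) ^ (l' - 1) * regIncBeta m m' t * regIncBeta n n' t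

/-- The Pochhammer symbol (rising factorial) `(a)_k = a(a+1)⋯(a+k-1)`. -/
noncomputable def poch (a : ℝ) (k : ℕ) : ℝ := ∏ i ∈ Finset.range k, (a + i)

/-- The hypergeometric value `₃F₂(a₁,a₂,a₃; b₁,b₂; 1)`. -/
noncomputable def F32 (a1 a2 a3 b1 b2 : ℝ) : ℝ :=
  ∑' k : ℕ, poch a1 k * poch a2 k * poch a3 k / (poch b1 k * poch b2 k * (Nat.factorial k))

open Filter Set

lemma poch_zero (a : ℝ) : poch a 0 = 1 := by simp [poch]

lemma poch_succ (a : ℝ) (k : ℕ) : poch a (k + 1) = poch a k * (a + k) := by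
  simp [poch, Finset.prod_range_succ]

/-- abbreviation for binomial coefficients -/
noncomputable def bc (a : ℝ) (k : ℕ) : ℝ := poch a k / (Nat.factorial k)

lemma bc_zero (a : ℝ) : bc a 0 = 1 := by simp [bc, poch_zero]

lemma bc_succ (a : ℝ) (k : ℕ) : bc a (k + 1) * (k + 1) = bc a k * (a + k) := by
  have h1 : (Nat.factorial (k+1) : ℝ) = (Nat.factorial k) * (k+1) := by
    push_cast [Nat.factorial_succ]; ring
  have h2 : (Nat.factorial k : ℝ) ≠ 0 := Nat.cast_ne_zero.2 (Nat.factorial_ne_zero k)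
  have h3 : ((k:ℝ) + 1) ≠ 0 := by positivity
  simp only [bc, poch_succ, h1]
  field_simp

lemma tendsto_ratio (a : ℝ) : Tendsto (fun k : ℕ => |a + k| / (k + 1)) atTop (nhds 1) := by
  have h : ∀ k : ℕ, |a + k| / (k + 1) = |1 + (a - 1) * (1 / (k + 1))| := by
    intro k
    have hk : (0:ℝ) < (k:ℝ) + 1 := by positivity
    rw [show (1:ℝ) + (a - 1) * (1 / ((k:ℝ) + 1)) = (a + k) / (k + 1) by field_simp; ring,
      abs_div, abs_of_pos hk]
  simp_rw [h]
  have := tendsto_one_div_add_atTop_nhds_zero_nat (𝕜 := ℝ)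
  have h2 : Tendsto (fun k : ℕ => 1 + (a - 1) * (1 / ((k:ℝ) + 1))) atTop (nhds (1 + (a-1) * 0)) := by
    exact tendsto_const_nhds.add (tendsto_const_nhds.mul this)
  have h3 := h2.abs
  simpa using h3

lemma summable_of_ratio_tendsto {f : ℕ → ℝ} {ρ : ℕ → ℝ} {L : ℝ} (hL : L < 1)
    (h : ∀ k, ‖f (k+1)‖ ≤ ρ k * ‖f k‖) (hρ : Tendsto ρ atTop (nhds L)) : Summable f := by
  have hr1 : (L + 1) / 2 < 1 := by linarith
  have hev : ∀ᶠ k in atTop, ρ k < (L + 1) / 2 := hρ.eventually_lt_const (by linarith)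
  refine summable_of_ratio_norm_eventually_le hr1 ?_
  filter_upwards [hev] with k hk
  calc ‖f (k+1)‖ ≤ ρ k * ‖f k‖ := h k
    _ ≤ (L + 1) / 2 * ‖f k‖ := by
        apply mul_le_mul_of_nonneg_right (le_of_lt hk) (norm_nonneg _)

lemma bc_succ' (a : ℝ) (k : ℕ) : bc a (k + 1) = bc a k * (a + k) / (k + 1) := by
  have h3 : ((k:ℝ) + 1) ≠ 0 := by positivity
  rw [eq_div_iff h3, bc_succ]

lemma abs_natcast_add_one (k : ℕ) : |((k:ℝ)) + 1| = (k:ℝ) + 1 :=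
  abs_of_pos (by positivity)

lemma summable_S1 (a x : ℝ) (hx : |x| < 1) : Summable (fun k => bc a k * x ^ k) := by
  refine summable_of_ratio_tendsto (f := fun k => bc a k * x ^ k)
    (ρ := fun k => |a + k| / (k + 1) * |x|) hx (fun k => ?_) ?_
  · rw [Real.norm_eq_abs, Real.norm_eq_abs, bc_succ', pow_succ]
    apply le_of_eq
    simp only [abs_mul, abs_div, abs_pow, abs_natcast_add_one]
    have h3 : ((k:ℝ) + 1) ≠ 0 := by positivity
    field_simp
  · have := (tendsto_ratio a).mul_const |x|
    simpa using this

lemma summable_S2 (a r : ℝ) (hr : |r| < 1) :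
    Summable (fun k : ℕ => |bc a k| * k * r ^ (k - 1)) := by
  rw [← summable_nat_add_iff 1]
  refine summable_of_ratio_tendsto
    (ρ := fun k => |a + 1 + (k:ℝ)| / ((k:ℝ) + 1) * |r|) hr (fun k => ?_) ?_
  · simp only [Nat.add_sub_cancel]
    rw [Real.norm_eq_abs, Real.norm_eq_abs]
    rw [bc_succ' a (k+1), pow_succ]
    apply le_of_eq
    push_cast
    simp only [abs_mul, abs_div, abs_pow, abs_abs, abs_natcast_add_one]
    have h3 : ((k:ℝ) + 1 + 1) ≠ 0 := by positivity
    have h4 : ((k:ℝ) + 1) ≠ 0 := by positivity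
    field_simp
    ring
  · have := (tendsto_ratio (a + 1)).mul_const |r|
    simpa using this

lemma binomial (a x : ℝ) (hx0 : 0 ≤ x) (hx1 : x < 1) :
    HasSum (fun k => bc a k * x ^ k) ((1 - x) ^ (-a) : ℝ) := by
  set r : ℝ := (1 + x) / 2 with hrdef
  have hr1 : r < 1 := by rw [hrdef]; linarith
  have hxr : x < r := by rw [hrdef]; linarith
  have hr0 : 0 < r := by rw [hrdef]; linarith
  set f : ℝ → ℝ := fun z => ∑' k, bc a k * z ^ k with hfdef
  have hu : Summable (fun k : ℕ => |bc a k| * k * r ^ (k - 1)) :=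
    summable_S2 a r (by rwa [abs_of_pos hr0])
  have hbound : ∀ (k : ℕ) (z : ℝ), z ∈ Ioo (-r) r →
      ‖bc a k * ((k : ℝ) * z ^ (k - 1))‖ ≤ |bc a k| * k * r ^ (k - 1) := by
    intro k z hz
    have hza : |z| ≤ r := le_of_lt (abs_lt.2 ⟨hz.1, hz.2⟩)
    rw [Real.norm_eq_abs, abs_mul, abs_mul, Nat.abs_cast, abs_pow]
    rw [← mul_assoc]
    apply mul_le_mul_of_nonneg_left _ (by positivity)
    exact pow_le_pow_left₀ (abs_nonneg z) hza _
  have hg0 : Summable (fun k : ℕ => bc a k * (0:ℝ) ^ k) := by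
    apply summable_of_ne_finset_zero (s := ({0} : Finset ℕ))
    intro k hk
    have : k ≠ 0 := by simpa using hk
    simp [zero_pow this]
  have hderiv : ∀ y ∈ Ioo (-r) r,
      HasDerivAt f (∑' k, bc a k * ((k:ℝ) * y ^ (k - 1))) y := by
    intro y hy
    exact hasDerivAt_tsum_of_isPreconnected hu isOpen_Ioo (convex_Ioo _ _).isPreconnected
      (fun k z _ => (hasDerivAt_pow k z).const_mul (bc a k))
      hbound (by constructor <;> [linarith; exact hr0] : (0:ℝ) ∈ Ioo (-r) r) hg0 hy
  have haux : ∀ y ∈ Ioo (-r) r,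
      (1 - y) * (∑' k, bc a k * ((k:ℝ) * y ^ (k - 1))) = a * ∑' k, bc a k * y ^ k := by
    intro y hy
    have hyabs : |y| < 1 := lt_of_le_of_lt (le_of_lt (abs_lt.2 ⟨hy.1, hy.2⟩)) hr1
    have hS1 : Summable (fun k => bc a k * y ^ k) := summable_S1 a y hyabs
    have hS2 : Summable (fun k => bc a k * ((k:ℝ) * y ^ (k - 1))) :=
      Summable.of_norm_bounded hu (fun k => hbound k y hy)
    have hTfun : (fun k : ℕ => bc a k * (k:ℝ) * y ^ k)
        = fun k => y * (bc a k * ((k:ℝ) * y ^ (k - 1))) := by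
      funext k
      cases k with
      | zero => simp
      | succ n => push_cast; ring
    have hT : Summable (fun k : ℕ => bc a k * (k:ℝ) * y ^ k) := by
      rw [hTfun]; exact hS2.mul_left y
    have h3 : ∑' k, bc a k * (k:ℝ) * y ^ k
        = y * ∑' k, bc a k * ((k:ℝ) * y ^ (k - 1)) := by
      rw [hTfun, tsum_mul_left]
    have h1 : ∑' k, bc a k * ((k:ℝ) * y ^ (k - 1))
        = a * (∑' k, bc a k * y ^ k) + ∑' k, bc a k * (k:ℝ) * y ^ k := by
      rw [hS2.tsum_eq_zero_add]
      have hterm : ∀ k : ℕ, bc a (k+1) * (((k+1 : ℕ):ℝ) * y ^ ((k+1) - 1))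
          = a * (bc a k * y ^ k) + bc a k * (k:ℝ) * y ^ k := by
        intro k
        have := bc_succ a k
        rw [Nat.add_sub_cancel]
        push_cast at this ⊢
        linear_combination y ^ k * this
      simp only [hterm]
      rw [(hS1.mul_left a).tsum_add hT, Nat.cast_zero, tsum_mul_left]
      simp
    rw [sub_mul, one_mul, ← h3, h1]
    ring
  set g : ℝ → ℝ := fun y => (1 - y) ^ a * f y with hgdef
  have hgderiv : ∀ y ∈ Icc 0 x, HasDerivAt g 0 y := by
    intro y hy
    have hymem : y ∈ Ioo (-r) r := ⟨by linarith [hy.1], lt_of_le_of_lt hy.2 hxr⟩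
    have h1y : (1:ℝ) - y ≠ 0 := by
      have : y < 1 := lt_of_lt_of_le hymem.2 (le_of_lt hr1)
      intro h; rw [sub_eq_zero] at h; linarith
    have hp : HasDerivAt (fun z : ℝ => (1 - z) ^ a) (-1 * a * (1 - y) ^ (a - 1)) y :=
      HasDerivAt.rpow_const ((hasDerivAt_id y).const_sub 1) (Or.inl h1y)
    have htot := hp.mul (hderiv y hymem)
    have hval : -1 * a * (1 - y) ^ (a - 1) * f y
        + (1 - y) ^ a * (∑' k, bc a k * ((k:ℝ) * y ^ (k - 1))) = 0 := by
      have hsplit : (1 - y) ^ a = (1 - y) ^ (a - 1) * (1 - y) := by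
        rw [← Real.rpow_add_one h1y (a - 1)]; ring_nf
      rw [hsplit]
      simp only [hfdef]
      rw [mul_assoc ((1 - y) ^ (a - 1)) (1 - y), haux y hymem]
      ring
    rw [← hval]
    exact htot
  have hconst := constant_of_has_deriv_right_zero
    (f := g) (a := 0) (b := x)
    (fun y hy => ((hgderiv y hy).continuousAt).continuousWithinAt)
    (fun y hy => ((hgderiv y (Ico_subset_Icc_self hy)).hasDerivWithinAt))
  have hgx := hconst x (right_mem_Icc.2 hx0)
  have hf0 : f 0 = 1 := by
    show (∑' k : ℕ, bc a k * (0:ℝ) ^ k) = 1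
    rw [tsum_eq_single 0 (by intro k hk; simp [zero_pow hk])]
    simp [bc_zero]
  have hg02 : g 0 = 1 := by rw [hgdef]; simp [hf0]
  rw [hg02] at hgx
  simp only [hgdef] at hgx
  have h1x : (0:ℝ) < 1 - x := by linarith
  have hfx : f x = (1 - x) ^ (-a) := by
    rw [Real.rpow_neg (le_of_lt h1x)]
    have hne : (1 - x) ^ a ≠ 0 := by positivity
    field_simp at hgx ⊢
    linarith [hgx]
  have hsum : Summable (fun k => bc a k * x ^ k) :=
    summable_S1 a x (by rwa [abs_of_nonneg hx0])
  have hthis := hsum.hasSum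
  have hfx' : (∑' k, bc a k * x ^ k) = (1 - x) ^ (-a) := hfx
  rwa [hfx'] at hthis

lemma summable_tele (a m : ℝ) (ha : a < 1) (hm : 0 < m) :
    Summable (fun k : ℕ => |bc a k| / (m + k)) := by
  set N : ℕ := ⌈-a⌉₊ with hN
  have haN : ∀ k : ℕ, (0:ℝ) ≤ a + (k + N) := by
    intro k
    have h1 : -a ≤ (N:ℝ) := Nat.le_ceil _
    have h2 : (0:ℝ) ≤ (k:ℕ) := Nat.cast_nonneg k
    push_cast; linarith
  set d : ℕ → ℝ := fun k => |bc a (k + N)| with hd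
  have hdstep : ∀ k : ℕ, d (k + 1) = d k * ((a + (k + N)) / ((k:ℝ) + N + 1)) := by
    intro k
    have : (k + 1 + N) = (k + N) + 1 := by ring
    rw [hd]
    simp only
    rw [this, bc_succ' a (k + N)]
    push_cast
    rw [abs_div, abs_mul, abs_of_nonneg (haN k)]
    rw [abs_of_pos (show (0:ℝ) < (k:ℝ) + (N:ℝ) + 1 by positivity)]
    ring
  have hdnonneg : ∀ k, 0 ≤ d k := fun k => abs_nonneg _
  have hdec : ∀ k : ℕ, d (k + 1) ≤ d k := by
    intro k
    rw [hdstep k]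
    have h1 : (a + (k + N)) / ((k:ℝ) + N + 1) ≤ 1 := by
      rw [div_le_one (by positivity)]
      linarith
    calc d k * ((a + (k + N)) / ((k:ℝ) + N + 1)) ≤ d k * 1 :=
          mul_le_mul_of_nonneg_left h1 (hdnonneg k)
      _ = d k := mul_one _
  have hsub : Summable (fun k => d k - d (k + 1)) := by
    apply summable_of_sum_range_le (c := d 0)
    · intro n; linarith [hdec n]
    · intro n
      rw [Finset.sum_range_sub' d n]
      linarith [hdnonneg n]
  have hkey : ∀ k : ℕ, d k / ((k:ℝ) + N + 1) = (d k - d (k + 1)) / (1 - a) := by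
    intro k
    rw [hdstep k]
    have hpos : ((k:ℝ) + N + 1) ≠ 0 := by positivity
    have h1a : (1:ℝ) - a ≠ 0 := by intro h; rw [sub_eq_zero] at h; linarith
    field_simp
    ring
  have hsum2 : Summable (fun k : ℕ => d k / ((k:ℝ) + N + 1)) := by
    have := hsub.div_const (1 - a)
    exact this.congr (fun k => (hkey k).symm)
  have hC : Summable (fun k : ℕ => max 1 (1/m) * (d k / ((k:ℝ) + N + 1))) := hsum2.mul_left _
  have hcomp : Summable (fun k : ℕ => |bc a (k + N)| / (m + (k + N : ℕ))) := by
    apply Summable.of_nonneg_of_le (fun k => by positivity) _ hC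
    intro k
    have hj : (0:ℝ) ≤ (k:ℝ) + N := by positivity
    have hb : 1 / (m + ((k:ℝ) + N)) ≤ max 1 (1/m) / (((k:ℝ) + N) + 1) := by
      rw [div_le_div_iff₀ (by positivity) (by positivity)]
      rcases le_total 1 m with hm1 | hm1
      · have : (1:ℝ) ≤ max 1 (1/m) := le_max_left _ _
        nlinarith
      · have h1 : 1/m ≤ max 1 (1/m) := le_max_right _ _
        have h2 : ((k:ℝ) + N + 1) ≤ (m + ((k:ℝ) + N)) / m := by
          rw [le_div_iff₀ hm]; nlinarith
        have h3 : (m + ((k:ℝ) + N)) / m = 1/m * (m + ((k:ℝ) + N)) := by ring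
        have h4 : 1/m * (m + ((k:ℝ) + N)) ≤ max 1 (1/m) * (m + ((k:ℝ) + N)) :=
          mul_le_mul_of_nonneg_right h1 (by positivity)
        calc 1 * ((k:ℝ) + ↑N + 1) = (k:ℝ) + N + 1 := one_mul _
          _ ≤ (m + ((k:ℝ) + N)) / m := h2
          _ = 1/m * (m + ((k:ℝ) + N)) := h3
          _ ≤ max 1 (1/m) * (m + ((k:ℝ) + N)) := h4
    calc |bc a (k + N)| / (m + ((k + N : ℕ):ℝ))
        = |bc a (k + N)| * (1 / (m + ((k:ℝ) + N))) := by push_cast; ring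
      _ ≤ |bc a (k + N)| * (max 1 (1/m) / (((k:ℝ) + N) + 1)) :=
          mul_le_mul_of_nonneg_left hb (abs_nonneg _)
      _ ≤ max 1 (1/m) * (d k / ((k:ℝ) + N + 1)) := by
          rw [hd]; simp only; push_cast; apply le_of_eq; ring
  exact (summable_nat_add_iff N).mp hcomp

lemma integral_rpow_exp (m : ℝ) (hm : 0 < m) (k : ℕ) (t : ℝ) (ht0 : 0 ≤ t) :
    ∫ s in (0:ℝ)..t, s ^ (m + k - 1 : ℝ) = t ^ (m + k : ℝ) / (m + k) := by
  have h1 : (-1 : ℝ) < m + k - 1 := by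
    have : (0:ℝ) ≤ (k:ℝ) := Nat.cast_nonneg k
    linarith
  rw [integral_rpow (Or.inl h1)]
  have h2 : m + (k:ℝ) - 1 + 1 = m + k := by ring
  rw [h2, Real.zero_rpow (by positivity : (m + (k:ℝ)) ≠ 0)]
  ring

lemma key_hasSum (m m' : ℝ) (hm : 0 < m) (hm' : 0 < m') {t : ℝ} (ht0 : 0 ≤ t) (ht1 : t ≤ 1) :
    HasSum (fun k : ℕ => bc (1 - m') k * (t ^ (m + k : ℝ) / (m + k)))
      (∫ s in (0:ℝ)..t, s ^ (m - 1) * (1 - s) ^ (m' - 1)) := by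
  set a : ℝ := 1 - m' with hadef
  have ha : a < 1 := by rw [hadef]; linarith
  set F : ℕ → ℝ → ℝ := fun k s => bc a k * s ^ (m + k - 1 : ℝ) with hF
  set μ : Measure ℝ := volume.restrict (Set.Ioc 0 t) with hμ
  have hexp : ∀ k : ℕ, (-1 : ℝ) < m + k - 1 := by
    intro k
    have : (0:ℝ) ≤ (k:ℝ) := Nat.cast_nonneg k
    linarith
  have hFi : ∀ k, Integrable (F k) μ := by
    intro k
    have h1 : IntervalIntegrable (fun s : ℝ => s ^ (m + k - 1 : ℝ)) volume 0 t :=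
      intervalIntegral.intervalIntegrable_rpow' (hexp k)
    have h2 := h1.const_mul (bc a k)
    rw [intervalIntegrable_iff_integrableOn_Ioc_of_le ht0] at h2
    exact h2
  have hintF : ∀ k, ∫ s, F k s ∂μ = bc a k * (t ^ (m + k : ℝ) / (m + k)) := by
    intro k
    rw [hμ, ← intervalIntegral.integral_of_le ht0]
    rw [hF]
    simp only
    rw [intervalIntegral.integral_const_mul, integral_rpow_exp m hm k t ht0]
  have hnorm : ∀ k, ∫ s, ‖F k s‖ ∂μ = |bc a k| * (t ^ (m + k : ℝ) / (m + k)) := by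
    intro k
    rw [hμ, ← intervalIntegral.integral_of_le ht0]
    have hcg : ∀ s ∈ Set.uIcc (0:ℝ) t, ‖F k s‖ = |bc a k| * s ^ (m + k - 1 : ℝ) := by
      intro s hs
      rw [Set.uIcc_of_le ht0] at hs
      rw [hF]
      simp only
      rw [Real.norm_eq_abs, abs_mul, abs_of_nonneg (Real.rpow_nonneg hs.1 _)]
    rw [intervalIntegral.integral_congr hcg, intervalIntegral.integral_const_mul,
      integral_rpow_exp m hm k t ht0]
  have hsummable : Summable (fun k => ∫ s, ‖F k s‖ ∂μ) := by
    apply Summable.of_nonneg_of_le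
      (fun k => integral_nonneg (fun s => norm_nonneg _))
      (fun k => ?_) (summable_tele a m ha hm)
    rw [hnorm k]
    have h1 : t ^ (m + k : ℝ) ≤ 1 := Real.rpow_le_one ht0 ht1 (by positivity)
    have h2 : (0:ℝ) < m + k := by positivity
    calc |bc a k| * (t ^ (m + k : ℝ) / (m + k)) ≤ |bc a k| * (1 / (m + k)) := by
          apply mul_le_mul_of_nonneg_left _ (abs_nonneg _)
          gcongr
      _ = |bc a k| / (m + k) := by ring
  have hmain := hasSum_integral_of_summable_integral_norm hFi hsummable
  have htsum : ∫ s, (∑' k, F k s) ∂μ = ∫ s in (0:ℝ)..t, s ^ (m - 1) * (1 - s) ^ (m' - 1) := by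
    rw [intervalIntegral.integral_of_le ht0, hμ]
    apply integral_congr_ae
    have hae1 : ∀ᵐ s ∂(volume.restrict (Set.Ioc (0:ℝ) t)), s ∈ Set.Ioc (0:ℝ) t :=
      ae_restrict_mem measurableSet_Ioc
    have hae2 : ∀ᵐ s ∂(volume.restrict (Set.Ioc (0:ℝ) t)), s ≠ 1 := by
      apply ae_restrict_of_ae
      rw [ae_iff]
      have : {x : ℝ | ¬ x ≠ 1} = {1} := by ext x; simp
      rw [this]
      exact Real.volume_singleton
    filter_upwards [hae1, hae2] with s hs hs1
    have hs0 : 0 < s := hs.1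
    have hslt : s < 1 := lt_of_le_of_ne (le_trans hs.2 ht1) hs1
    have hterm : ∀ k : ℕ, F k s = s ^ (m - 1) * (bc a k * s ^ k) := by
      intro k
      rw [hF]
      simp only
      rw [show (m + k - 1 : ℝ) = (m - 1) + (k : ℝ) by ring,
        Real.rpow_add hs0, Real.rpow_natCast]
      ring
    calc ∑' k, F k s = ∑' k, s ^ (m - 1) * (bc a k * s ^ k) := tsum_congr hterm
      _ = s ^ (m - 1) * ∑' k, bc a k * s ^ k := tsum_mul_left
      _ = s ^ (m - 1) * (1 - s) ^ (m' - 1) := by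
          rw [(binomial a s (le_of_lt hs0) hslt).tsum_eq]
          rw [hadef]
          norm_num
  rw [htsum] at hmain
  have hfe : (fun k => ∫ s, F k s ∂μ) = fun k => bc a k * (t ^ (m + k : ℝ) / (m + k)) :=
    funext hintF
  rwa [hfe] at hmain

lemma poch_mul_add (m : ℝ) (k : ℕ) : poch m k * (m + k) = m * poch (m + 1) k := by
  induction k with
  | zero => simp [poch_zero]
  | succ n ih =>
    rw [poch_succ, poch_succ]
    push_cast
    push_cast at ih
    linear_combination (m + n + 1) * ih

lemma poch_pos {m : ℝ} (hm : 0 < m) (k : ℕ) : 0 < poch (m + 1) k := by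
  apply Finset.prod_pos
  intro i _
  have : (0:ℝ) ≤ (i:ℝ) := Nat.cast_nonneg i
  linarith

/-- the hypergeometric series representation
`I(μ,μ';t) = (t^μ/(μ B(μ,μ'))) ₂F₁(1−μ', μ; μ+1; t)` for all `t ∈ [0,1]`
(convergence included at `t = 1`). -/
theorem stmt3 (m m' : ℝ) (hm : 0 < m) (hm' : 0 < m') :
    ∀ t ∈ Set.Icc (0:ℝ) 1,
      HasSum
        (fun k : ℕ => t ^ m / (m * betaFn m m') *
          (poch (1 - m') k * poch m k / (poch (m + 1) k * (Nat.factorial k)) * t ^ k))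
        (regIncBeta m m' t) := by
  intro t ht
  have key := key_hasSum m m' hm hm' ht.1 ht.2
  have h2 := key.mul_left (betaFn m m')⁻¹
  have hterm : ∀ k : ℕ, (betaFn m m')⁻¹ * (bc (1 - m') k * (t ^ (m + k : ℝ) / (m + k)))
      = t ^ m / (m * betaFn m m') *
        (poch (1 - m') k * poch m k / (poch (m + 1) k * (Nat.factorial k)) * t ^ k) := by
    intro k
    have htk : t ^ (m + k : ℝ) = t ^ m * t ^ k := by
      rw [Real.rpow_add' ht.1 (by positivity : m + (k:ℝ) ≠ 0), Real.rpow_natCast]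
    rw [htk, bc, div_eq_mul_inv (t ^ m) (m * betaFn m m'), mul_inv]
    have hPQ := poch_mul_add m k
    have hR : poch (m + 1) k ≠ 0 := ne_of_gt (poch_pos hm k)
    have hK : ((Nat.factorial k : ℕ) : ℝ) ≠ 0 := Nat.cast_ne_zero.2 (Nat.factorial_ne_zero k)
    have hmk : (m + (k:ℝ)) ≠ 0 := by positivity
    have h : poch (1 - m') k / (Nat.factorial k : ℝ) * (t ^ m * t ^ k / (m + (k:ℝ)))
        = t ^ m * m⁻¹ * (poch (1 - m') k * poch m k
            / (poch (m + 1) k * (Nat.factorial k : ℝ)) * t ^ k) := by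
      have hpm : poch m k = m * poch (m + 1) k / (m + k) := by rw [eq_div_iff hmk]; exact hPQ
      rw [hpm]
      field_simp
    linear_combination ((betaFn m m')⁻¹) * h
  have hfe : (fun k : ℕ => (betaFn m m')⁻¹ * (bc (1 - m') k * (t ^ (m + k : ℝ) / (m + k))))
      = fun k : ℕ => t ^ m / (m * betaFn m m') *
        (poch (1 - m') k * poch m k / (poch (m + 1) k * (Nat.factorial k)) * t ^ k) :=
    funext hterm
  rw [hfe] at h2
  exact h2
end

section
/- For all positive reals λ, λ', μ, μ', ν, ν', ℬ(λ,λ',μ,μ',ν,ν') = (1/B(λ,λ')) · Σ_{k=0}^∞ [(1−λ')_k/(k!(λ+k))] · (λ+k) ∫₀¹ t^(λ+k−1) I(μ,μ';t) I(ν,ν';t) dt; that is, ℬ(λ,λ',μ,μ',ν,ν') is the stated series combination of the values ℬ(λ+k,1,μ,μ',ν,ν'). -/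
open MeasureTheory

namespace Aux

noncomputable def A (a : ℝ) (k : ℕ) : ℝ := poch (1 - a) k / (Nat.factorial k)

lemma poch_succ (a : ℝ) (k : ℕ) : poch a (k + 1) = poch a k * (a + k) :=
  Finset.prod_range_succ _ _

lemma poch_pos {a : ℝ} (ha : 0 < a) (k : ℕ) : 0 < poch a k :=
  Finset.prod_pos fun i _ => by positivity

lemma A_zero (a : ℝ) : A a 0 = 1 := by simp [A, poch]

lemma A_succ (a : ℝ) (k : ℕ) : A a (k + 1) = A a k * (1 - a + k) / (k + 1) := by
  have h1 : ((k + 1 : ℕ).factorial : ℝ) = (k + 1) * (k.factorial : ℝ) := by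
    rw [Nat.factorial_succ]; push_cast; ring
  rw [A, A, poch_succ, h1, div_mul_eq_mul_div, div_div, mul_comm ((k : ℝ) + 1)]

lemma abs_A_succ (a : ℝ) (k : ℕ) : |A a (k + 1)| = |A a k| * |1 - a + k| / (k + 1) := by
  rw [A_succ, abs_div, abs_mul]
  congr 1
  exact abs_of_pos (by positivity)

lemma A_bounded {a : ℝ} (ha : 0 < a) : ∃ C : ℝ, 0 < C ∧ ∀ k, |A a k| ≤ C := by
  set K := ⌈a⌉₊ with hK
  have hstep : ∀ k, K ≤ k → |A a (k + 1)| ≤ |A a k| := by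
    intro k hk
    have hak : a - 1 ≤ (k : ℝ) := by
      have h1 : a ≤ (K : ℝ) := Nat.le_ceil a
      have hKk : (K : ℝ) ≤ k := Nat.cast_le.2 hk
      linarith
    rw [abs_A_succ]
    have h1 : |1 - a + (k : ℝ)| ≤ (k : ℝ) + 1 := by
      rw [abs_of_nonneg (by linarith)]; linarith
    have h3 : (0:ℝ) < (k : ℝ) + 1 := by positivity
    rw [div_le_iff₀ h3]
    calc |A a k| * |1 - a + (k : ℝ)| ≤ |A a k| * ((k : ℝ) + 1) :=
          mul_le_mul_of_nonneg_left h1 (abs_nonneg _)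
      _ = |A a k| * ((k : ℝ) + 1) := rfl
  have hmono : ∀ j, |A a (K + j)| ≤ |A a K| := by
    intro j
    induction j with
    | zero => simp
    | succ j ih =>
      have := hstep (K + j) (Nat.le_add_right _ _)
      calc |A a (K + (j + 1))| = |A a ((K + j) + 1)| := by ring_nf
        _ ≤ |A a (K + j)| := this
        _ ≤ |A a K| := ih
  refine ⟨(∑ i ∈ Finset.range (K + 1), |A a i|) + 1, by positivity, fun k => ?_⟩
  have hsum : ∀ i, i ∈ Finset.range (K + 1) → |A a i| ≤ ∑ i ∈ Finset.range (K + 1), |A a i| :=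
    fun i hi => Finset.single_le_sum (fun j _ => abs_nonneg (A a j)) hi
  rcases le_or_gt k K with h | h
  · have := hsum k (Finset.mem_range.2 (Nat.lt_succ_of_le h))
    linarith
  · have hk : k = K + (k - K) := by omega
    have h1 := hmono (k - K)
    rw [← hk] at h1
    have h2 := hsum K (Finset.mem_range.2 (Nat.lt_succ_self K))
    linarith

end Aux

section Binom

lemma hasSum_binomial {a : ℝ} (ha : 0 < a) {t : ℝ} (ht0 : 0 ≤ t) (ht1 : t < 1) :
    HasSum (fun k : ℕ => Aux.A a k * t ^ k) ((1 - t) ^ (a - 1)) := by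
  obtain ⟨C, hC0, hC⟩ := Aux.A_bounded ha
  rcases eq_or_lt_of_le ht0 with rfl | ht0'
  · have h0 : (fun k : ℕ => Aux.A a k * (0:ℝ) ^ k) 0 = 1 := by simp [Aux.A_zero]
    have h := hasSum_single (f := fun k : ℕ => Aux.A a k * (0:ℝ) ^ k) 0
      (fun b hb => by simp [zero_pow hb])
    rw [show Aux.A a 0 * (0:ℝ) ^ 0 = 1 from h0] at h
    simpa [Real.one_rpow] using h
  set r : ℝ := (1 + t) / 2 with hr
  have hr0 : 0 < r := by rw [hr]; linarith
  have hrt : t < r := by rw [hr]; linarith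
  have hr1 : r < 1 := by rw [hr]; linarith
  have hso : IsOpen (Set.Ioo (-r) r) := isOpen_Ioo
  have hsp : IsPreconnected (Set.Ioo (-r) r) := (convex_Ioo _ _).isPreconnected
  have hts : t ∈ Set.Ioo (-r) r := ⟨by linarith, hrt⟩
  have h0s : (0:ℝ) ∈ Set.Ioo (-r) r := ⟨by linarith, hr0⟩
  set u : ℕ → ℝ := fun n => C * (((n : ℝ) + 1) * r ^ n) / r with hu
  have hgeo : Summable (fun n : ℕ => r ^ n) := summable_geometric_of_lt_one hr0.le hr1
  have hkgeo : Summable (fun n : ℕ => (n : ℝ) * r ^ n) := by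
    have := summable_pow_mul_geometric_of_norm_lt_one (R := ℝ) 1
      (r := r) (by rw [Real.norm_eq_abs, abs_of_pos hr0]; exact hr1)
    simpa using this
  have h3 : Summable (fun n : ℕ => ((n : ℝ) + 1) * r ^ n) := by
    have := hkgeo.add hgeo
    convert this using 2 with n
    ring
  have hu_sum : Summable u := (h3.mul_left C).div_const r
  set g : ℕ → ℝ → ℝ := fun n x => Aux.A a n * x ^ n with hg
  set g' : ℕ → ℝ → ℝ := fun n x => Aux.A a n * (n * x ^ (n - 1)) with hg'
  have hderivg : ∀ n (y : ℝ), y ∈ Set.Ioo (-r) r → HasDerivAt (g n) (g' n y) y := by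
    intro n y _
    exact (hasDerivAt_pow n y).const_mul (Aux.A a n)
  have hbound : ∀ n (y : ℝ), y ∈ Set.Ioo (-r) r → ‖g' n y‖ ≤ u n := by
    intro n y hy
    have hyr : |y| ≤ r := by rw [abs_le]; exact ⟨hy.1.le, hy.2.le⟩
    rcases n with _ | n
    · simp only [hg', hu, Nat.cast_zero, zero_mul, mul_zero, norm_zero]
      positivity
    · have h1 : ‖g' (n + 1) y‖ ≤ C * (((n : ℝ) + 1) * |y| ^ n) := by
        simp only [hg', Real.norm_eq_abs, Nat.add_sub_cancel]
        rw [abs_mul, abs_mul, abs_pow, Nat.cast_add, Nat.cast_one,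
          abs_of_nonneg (show (0:ℝ) ≤ (n : ℝ) + 1 by positivity)]
        exact mul_le_mul (hC _) le_rfl (by positivity) hC0.le
      refine h1.trans ?_
      have hu1 : u (n + 1) = C * (((n : ℝ) + 2) * r ^ n) := by
        simp only [hu]
        push_cast
        rw [pow_succ]
        field_simp
        ring
      rw [hu1]
      apply mul_le_mul_of_nonneg_left _ hC0.le
      exact mul_le_mul (by linarith) (pow_le_pow_left₀ (abs_nonneg _) hyr n)
        (by positivity) (by positivity)
  have hsum_at : ∀ x ∈ Set.Ioo (-r) r, Summable (fun n => g n x) := by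
    intro x hx
    have hxr : |x| ≤ r := by rw [abs_le]; exact ⟨hx.1.le, hx.2.le⟩
    apply Summable.of_norm_bounded (hgeo.mul_left C)
    intro n
    simp only [hg, Real.norm_eq_abs, abs_mul, abs_pow]
    exact mul_le_mul (hC _) (pow_le_pow_left₀ (abs_nonneg _) hxr n) (by positivity) hC0.le
  have hd : ∀ x ∈ Set.Ioo (-r) r,
      HasDerivAt (fun y => ∑' n, g n y) (∑' n, g' n x) x := fun x hx =>
    hasDerivAt_tsum_of_isPreconnected hu_sum hso hsp hderivg hbound h0s (hsum_at 0 h0s) hx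
  have hkey : ∀ x ∈ Set.Ioo (-r) r,
      (1 - x) * (∑' n, g' n x) = (1 - a) * ∑' n, g n x := by
    intro x hx
    have hxr : |x| ≤ r := by rw [abs_le]; exact ⟨hx.1.le, hx.2.le⟩
    have hs0 : Summable (fun n => g' n x) :=
      Summable.of_norm_bounded hu_sum (fun n => hbound n x hx)
    have hterm : ∀ k : ℕ, g' (k + 1) x = Aux.A a k * (1 - a + k) * x ^ k := by
      intro k
      simp only [hg', Nat.add_sub_cancel]
      rw [Aux.A_succ]
      have hk1 : ((k : ℝ) + 1) ≠ 0 := by positivity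
      push_cast
      field_simp
    have hshift : ∑' n, g' n x = ∑' k, Aux.A a k * (1 - a + k) * x ^ k := by
      rw [hs0.tsum_eq_zero_add]
      have h00 : g' 0 x = 0 := by simp [hg']
      rw [h00, zero_add]
      exact tsum_congr hterm
    have hs1 : Summable (fun k => Aux.A a k * (1 - a + k) * x ^ k) :=
      (((summable_nat_add_iff 1).2 hs0).congr hterm)
    have hs2 : Summable (fun k : ℕ => Aux.A a k * (k : ℝ) * x ^ k) := by
      apply Summable.of_norm_bounded (hkgeo.mul_left C)
      intro n
      simp only [Real.norm_eq_abs, abs_mul, abs_pow, Nat.abs_cast]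
      calc |Aux.A a n| * (n : ℝ) * |x| ^ n ≤ C * (n : ℝ) * r ^ n := by
            apply mul_le_mul (mul_le_mul (hC n) le_rfl (Nat.cast_nonneg n) hC0.le)
              (pow_le_pow_left₀ (abs_nonneg _) hxr n) (by positivity) (by positivity)
        _ = C * ((n : ℝ) * r ^ n) := by ring
    have hx2 : x * ∑' n, g' n x = ∑' k : ℕ, Aux.A a k * (k : ℝ) * x ^ k := by
      rw [← tsum_mul_left]
      apply tsum_congr
      intro n
      rcases n with _ | n
      · simp [hg']
      · simp only [hg', Nat.add_sub_cancel]
        rw [pow_succ]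
        push_cast
        ring
    rw [sub_mul, one_mul, hx2, hshift, ← hs1.tsum_sub hs2, ← tsum_mul_left]
    apply tsum_congr
    intro k
    simp only [hg]
    ring
  have h1x : ∀ x ∈ Set.Ioo (-r) r, (0:ℝ) < 1 - x := fun x hx => by
    have := hx.2; linarith
  have hdh : ∀ x ∈ Set.Ioo (-r) r,
      HasDerivAt (fun y => (∑' n, g n y) * (1 - y) ^ (1 - a)) 0 x := by
    intro x hx
    have h1 := h1x x hx
    have pw := Real.hasDerivAt_rpow_const (x := 1 - x) (p := 1 - a) (Or.inl h1.ne')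
    rw [show (1:ℝ) - a - 1 = -a by ring] at pw
    have base : HasDerivAt (fun y : ℝ => 1 - y) (-1) x := (hasDerivAt_id x).const_sub 1
    have d2 : HasDerivAt (fun y : ℝ => (1 - y) ^ (1 - a))
        ((1 - a) * (1 - x) ^ (-a) * -1) x := pw.comp x base
    have dh := (hd x hx).mul d2
    have e : (1 - x) ^ (1 - a) = (1 - x) * (1 - x) ^ (-a) := by
      rw [show (1:ℝ) - a = 1 + -a by ring, Real.rpow_add h1, Real.rpow_one]
    have hval : (∑' n, g' n x) * (1 - x) ^ (1 - a) +
        (∑' n, g n x) * ((1 - a) * (1 - x) ^ (-a) * -1) = 0 := by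
      rw [e]
      linear_combination (1 - x) ^ (-a) * hkey x hx
    rw [hval] at dh
    exact dh
  have hsub : Set.Icc (0:ℝ) t ⊆ Set.Ioo (-r) r := fun y hy =>
    ⟨by linarith [hy.1], by linarith [hy.2]⟩
  have hconst := constant_of_has_deriv_right_zero
    (f := fun y => (∑' n, g n y) * (1 - y) ^ (1 - a)) (a := 0) (b := t)
    (fun y hy => ((hdh y (hsub hy)).continuousAt).continuousWithinAt)
    (fun y hy => (hdh y (hsub (Set.mem_Icc.2 ⟨hy.1, hy.2.le⟩))).hasDerivWithinAt)
  have hct := hconst t (Set.mem_Icc.2 ⟨ht0, le_rfl⟩)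
  have hG0 : (∑' n, g n 0) = 1 := by
    rw [tsum_eq_single 0 (fun n hn => by simp [hg, zero_pow hn])]
    simp [hg, Aux.A_zero]
  simp only [sub_zero, Real.one_rpow, mul_one, hG0] at hct
  have h1t : (0:ℝ) < 1 - t := by linarith
  have e2 : (1 - t) ^ ((1:ℝ) - a) * (1 - t) ^ (a - 1) = 1 := by
    rw [← Real.rpow_add h1t, show (1:ℝ) - a + (a - 1) = 0 by ring, Real.rpow_zero]
  have hGt : (∑' n, g n t) = (1 - t) ^ (a - 1) := by
    calc (∑' n, g n t) = (∑' n, g n t) * ((1 - t) ^ ((1:ℝ) - a) * (1 - t) ^ (a - 1)) := by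
          rw [e2, mul_one]
      _ = ((∑' n, g n t) * (1 - t) ^ ((1:ℝ) - a)) * (1 - t) ^ (a - 1) := by ring
      _ = 1 * (1 - t) ^ (a - 1) := by rw [hct]
      _ = (1 - t) ^ (a - 1) := one_mul _
  exact ((hsum_at t hts).hasSum_iff).2 hGt

end Binom

section Summ

lemma summable_absA_div {a l : ℝ} (ha : 0 < a) (hl : 0 < l) :
    Summable (fun k : ℕ => |Aux.A a k| / (l + k)) := by
  set ε : ℝ := 1 - min a 1 / 2 with hε
  have hmin : 0 < min a 1 := lt_min ha one_pos
  have hmin1 : min a 1 ≤ 1 := min_le_right _ _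
  have hε0 : 0 < ε := by rw [hε]; linarith
  have hε1 : ε < 1 := by rw [hε]; linarith
  set c : ℕ → ℝ := fun k => poch ε k / (Nat.factorial k) with hc
  have hc_succ : ∀ k : ℕ, c (k + 1) = c k * (ε + k) / (k + 1) := by
    intro k
    have h1 : ((k + 1 : ℕ).factorial : ℝ) = (k + 1) * (k.factorial : ℝ) := by
      rw [Nat.factorial_succ]; push_cast; ring
    simp only [hc]
    rw [Aux.poch_succ, h1, div_mul_eq_mul_div, div_div, mul_comm ((k : ℝ) + 1)]
  have hc_pos : ∀ k, 0 < c k := fun k =>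
    div_pos (Aux.poch_pos hε0 k) (Nat.cast_pos.2 (Nat.factorial_pos k))
  have htel : ∀ k : ℕ, c k / (1 + k) = (c k - c (k + 1)) / (1 - ε) := by
    intro k
    rw [hc_succ]
    have hk1 : ((k : ℝ) + 1) ≠ 0 := by positivity
    have he : ((1 : ℝ) - ε) ≠ 0 := by linarith
    field_simp
    ring
  have hd_sum : Summable (fun k : ℕ => c k / (1 + k)) := by
    apply summable_of_sum_range_le (c := c 0 / (1 - ε))
      (fun n => div_nonneg (hc_pos n).le (by positivity))
    intro n
    calc ∑ i ∈ Finset.range n, c i / (1 + i)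
        = ∑ i ∈ Finset.range n, (c i - c (i + 1)) / (1 - ε) :=
          Finset.sum_congr rfl (fun i _ => htel i)
      _ = (∑ i ∈ Finset.range n, (c i - c (i + 1))) / (1 - ε) := by rw [Finset.sum_div]
      _ = (c 0 - c n) / (1 - ε) := by rw [Finset.sum_range_sub' c n]
      _ ≤ c 0 / (1 - ε) :=
          div_le_div₀ (hc_pos 0).le (by linarith [hc_pos n]) (by linarith) le_rfl
  set K := ⌈a⌉₊ with hK
  have h1aε : 1 - a ≤ ε := by
    rw [hε]
    have : min a 1 ≤ a := min_le_left _ _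
    linarith
  set D : ℝ := |Aux.A a K| / c K with hD
  have hD0 : 0 ≤ D := div_nonneg (abs_nonneg _) (hc_pos K).le
  have hC2 : ∀ j : ℕ, |Aux.A a (K + j)| ≤ D * c (K + j) := by
    intro j
    induction j with
    | zero =>
      simp only [Nat.add_zero, hD]
      rw [div_mul_cancel₀ _ (hc_pos K).ne']
    | succ j ih =>
      rw [show K + (j + 1) = (K + j) + 1 from rfl, Aux.abs_A_succ, hc_succ]
      have hka : a - 1 ≤ ((K + j : ℕ) : ℝ) := by
        have h1 : a ≤ (K : ℝ) := Nat.le_ceil a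
        have h2 : (K : ℝ) ≤ ((K + j : ℕ) : ℝ) := by
          push_cast
          linarith [Nat.cast_nonneg (α := ℝ) j]
        linarith
      have habs : |1 - a + ((K + j : ℕ) : ℝ)| ≤ ε + ((K + j : ℕ) : ℝ) := by
        rw [abs_of_nonneg (by linarith)]
        linarith
      have hden : (0:ℝ) < ((K + j : ℕ) : ℝ) + 1 := by positivity
      have step : |Aux.A a (K + j)| * |1 - a + ((K + j : ℕ) : ℝ)| ≤
          (D * c (K + j)) * (ε + ((K + j : ℕ) : ℝ)) :=
        mul_le_mul ih habs (abs_nonneg _) (mul_nonneg hD0 (hc_pos _).le)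
      calc |Aux.A a (K + j)| * |1 - a + ((K + j : ℕ) : ℝ)| / (((K + j : ℕ) : ℝ) + 1)
          ≤ (D * c (K + j)) * (ε + ((K + j : ℕ) : ℝ)) / (((K + j : ℕ) : ℝ) + 1) := by
            gcongr
        _ = D * (c (K + j) * (ε + ((K + j : ℕ) : ℝ)) / (((K + j : ℕ) : ℝ) + 1)) := by ring
  rw [← summable_nat_add_iff K]
  have hL0 : 0 < min l 1 := lt_min hl one_pos
  apply Summable.of_nonneg_of_le
    (fun k => div_nonneg (abs_nonneg _)
      (le_of_lt (add_pos_of_pos_of_nonneg hl (Nat.cast_nonneg _))))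
    (f := fun k => (D / min l 1) * (c (k + K) / (1 + ((k + K : ℕ) : ℝ))))
  · intro k
    have hnum : |Aux.A a (k + K)| ≤ D * c (k + K) := by
      rw [Nat.add_comm k K]
      exact hC2 k
    have h1 : min l 1 ≤ l := min_le_left _ _
    have h2 : min l 1 ≤ 1 := min_le_right _ _
    have hx : (0:ℝ) ≤ ((k + K : ℕ) : ℝ) := Nat.cast_nonneg _
    have hden : min l 1 * (1 + ((k + K : ℕ) : ℝ)) ≤ l + ((k + K : ℕ) : ℝ) := by nlinarith
    have hden0 : 0 < min l 1 * (1 + ((k + K : ℕ) : ℝ)) := by positivity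
    calc |Aux.A a (k + K)| / (l + ((k + K : ℕ) : ℝ))
        ≤ (D * c (k + K)) / (min l 1 * (1 + ((k + K : ℕ) : ℝ))) :=
          div_le_div₀ (mul_nonneg hD0 (hc_pos _).le) hnum hden0 hden
      _ = (D / min l 1) * (c (k + K) / (1 + ((k + K : ℕ) : ℝ))) := by
          field_simp
  · exact ((summable_nat_add_iff K).2 hd_sum).mul_left _
end Summ

section Beta

lemma betaIntegrand_left {a : ℝ} (ha : 0 < a) (b : ℝ) :
    IntervalIntegrable (fun s : ℝ => s ^ (a - 1) * (1 - s) ^ (b - 1)) volume 0 (1/2) := by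
  apply IntervalIntegrable.mul_continuousOn
  · exact intervalIntegral.intervalIntegrable_rpow' (by linarith)
  · apply ContinuousOn.rpow_const (continuousOn_const.sub continuousOn_id)
    intro x hx
    rw [Set.uIcc_of_le (by norm_num : (0:ℝ) ≤ 1/2)] at hx
    left
    have := hx.2
    have h1 : (0:ℝ) < 1 - x := by linarith
    exact ne_of_gt h1

lemma betaIntegrand_intervalIntegrable {a b : ℝ} (ha : 0 < a) (hb : 0 < b) :
    IntervalIntegrable (fun s : ℝ => s ^ (a - 1) * (1 - s) ^ (b - 1)) volume 0 1 := by
  refine (betaIntegrand_left ha b).trans ?_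
  have h2 := ((betaIntegrand_left hb a).comp_sub_left 1).symm
  have h3 : (1:ℝ) - 1/2 = 1/2 := by norm_num
  have h4 : (1:ℝ) - 0 = 1 := by norm_num
  rw [h3, h4] at h2
  have h5 : (fun x : ℝ => (fun s : ℝ => s ^ (b - 1) * (1 - s) ^ (a - 1)) (1 - x)) =
      (fun s : ℝ => s ^ (a - 1) * (1 - s) ^ (b - 1)) := by
    funext x
    simp only [sub_sub_cancel]
    ring
  rwa [h5] at h2

lemma betaIntegrand_nonneg {a b : ℝ} : ∀ s ∈ Set.Icc (0:ℝ) 1,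
    0 ≤ s ^ (a - 1) * (1 - s) ^ (b - 1) := fun s hs =>
  mul_nonneg (Real.rpow_nonneg hs.1 _) (Real.rpow_nonneg (by linarith [hs.2]) _)

lemma regIncBeta_continuousOn {a b : ℝ} (ha : 0 < a) (hb : 0 < b) :
    ContinuousOn (regIncBeta a b) (Set.Icc 0 1) := by
  have h := betaIntegrand_intervalIntegrable ha hb
  have hcont := intervalIntegral.continuousOn_primitive_interval' h
    (by rw [Set.uIcc_of_le (zero_le_one (α := ℝ))]; exact Set.left_mem_Icc.2 zero_le_one)
  rw [Set.uIcc_of_le (zero_le_one (α := ℝ))] at hcont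
  have hrw : regIncBeta a b =
      fun t => (betaFn a b)⁻¹ * ∫ s in (0:ℝ)..t, s ^ (a - 1) * (1 - s) ^ (b - 1) := rfl
  rw [hrw]
  exact continuousOn_const.mul hcont

lemma regIncBeta_abs_le {a b : ℝ} (ha : 0 < a) (hb : 0 < b) :
    ∀ t ∈ Set.Icc (0:ℝ) 1, |regIncBeta a b t| ≤ |(betaFn a b)⁻¹| * betaFn a b := by
  intro t ht
  have hint := betaIntegrand_intervalIntegrable ha hb
  have hF0 : 0 ≤ ∫ s in (0:ℝ)..t, s ^ (a - 1) * (1 - s) ^ (b - 1) :=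
    intervalIntegral.integral_nonneg ht.1
      (fun s hs => betaIntegrand_nonneg s ⟨hs.1, le_trans hs.2 ht.2⟩)
  have hFle : (∫ s in (0:ℝ)..t, s ^ (a - 1) * (1 - s) ^ (b - 1)) ≤ betaFn a b := by
    rw [betaFn]
    apply intervalIntegral.integral_mono_interval le_rfl ht.1 ht.2 _ hint
    apply (ae_restrict_iff' measurableSet_Ioc).2
    exact Filter.Eventually.of_forall fun s hs => betaIntegrand_nonneg s ⟨hs.1.le, hs.2⟩
  rw [regIncBeta, abs_mul, abs_of_nonneg hF0]
  exact mul_le_mul_of_nonneg_left hFle (abs_nonneg _)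

end Beta

/-- `ℬ(λ,λ',μ,μ',ν,ν')` as a convergent series combination of the
values `(λ+k) ∫₀¹ t^(λ+k−1) I I dt = ℬ(λ+k,1,μ,μ',ν,ν')`. -/
theorem stmt6 (l l' m m' n n' : ℝ) (hl : 0 < l) (hl' : 0 < l') (hm : 0 < m)
    (hm' : 0 < m') (hn : 0 < n) (hn' : 0 < n') :
    Summable
      (fun k : ℕ => poch (1 - l') k / ((Nat.factorial k) * (l + k)) *
        ((l + k) * ∫ t in (0:ℝ)..1,
          t ^ (l + k - 1) * regIncBeta m m' t * regIncBeta n n' t)) ∧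
    calB l l' m m' n n' =
      (betaFn l l')⁻¹ *
        ∑' k : ℕ, poch (1 - l') k / ((Nat.factorial k) * (l + k)) *
          ((l + k) * ∫ t in (0:ℝ)..1,
            t ^ (l + k - 1) * regIncBeta m m' t * regIncBeta n n' t) := by
  set Rm := regIncBeta m m' with hRm
  set Rn := regIncBeta n n' with hRn
  set Cm : ℝ := |(betaFn m m')⁻¹| * betaFn m m' with hCm
  set Cn : ℝ := |(betaFn n n')⁻¹| * betaFn n n' with hCn
  have hRmb : ∀ t ∈ Set.Icc (0:ℝ) 1, |Rm t| ≤ Cm := regIncBeta_abs_le hm hm'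
  have hRnb : ∀ t ∈ Set.Icc (0:ℝ) 1, |Rn t| ≤ Cn := regIncBeta_abs_le hn hn'
  have hCm0 : 0 ≤ Cm := le_trans (abs_nonneg _) (hRmb 0 ⟨le_rfl, zero_le_one⟩)
  have hCn0 : 0 ≤ Cn := le_trans (abs_nonneg _) (hRnb 0 ⟨le_rfl, zero_le_one⟩)
  set μ : Measure ℝ := volume.restrict (Set.Ioo 0 1) with hμ
  have hRmae : AEStronglyMeasurable Rm μ :=
    ((regIncBeta_continuousOn hm hm').mono Set.Ioo_subset_Icc_self).aestronglyMeasurable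
      measurableSet_Ioo
  have hRnae : AEStronglyMeasurable Rn μ :=
    ((regIncBeta_continuousOn hn hn').mono Set.Ioo_subset_Icc_self).aestronglyMeasurable
      measurableSet_Ioo
  have hrpow_cont : ∀ p : ℝ, ContinuousOn (fun t : ℝ => t ^ p) (Set.Ioo 0 1) := fun p =>
    ContinuousOn.rpow_const continuousOn_id (fun x hx => Or.inl (ne_of_gt hx.1))
  have hrpow_int : ∀ p : ℝ, -1 < p →
      IntegrableOn (fun t : ℝ => t ^ p) (Set.Ioo (0:ℝ) 1) volume := by
    intro p hp
    have h := intervalIntegral.intervalIntegrable_rpow' (a := 0) (b := 1) hp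
    rw [intervalIntegrable_iff_integrableOn_Ioc_of_le zero_le_one] at h
    exact h.mono_set Set.Ioo_subset_Ioc_self
  have hrpow_val : ∀ p : ℝ, -1 < p →
      (∫ t in Set.Ioo (0:ℝ) 1, t ^ p) = 1 / (p + 1) := by
    intro p hp
    rw [← MeasureTheory.integral_Ioc_eq_integral_Ioo,
      ← intervalIntegral.integral_of_le zero_le_one,
      integral_rpow (Or.inl hp), Real.one_rpow,
      Real.zero_rpow (by linarith : p + 1 ≠ 0)]
    ring
  set F : ℕ → ℝ → ℝ := fun k t =>
    poch (1 - l') k / (Nat.factorial k) * (t ^ (l + k - 1) * Rm t * Rn t) with hF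
  have hlk : ∀ k : ℕ, (0:ℝ) < l + k := fun k =>
    add_pos_of_pos_of_nonneg hl (Nat.cast_nonneg k)
  have hexp : ∀ k : ℕ, (-1:ℝ) < l + k - 1 := fun k => by have := hlk k; linarith
  have habs_bd : ∀ k, ∀ t ∈ Set.Ioo (0:ℝ) 1,
      ‖F k t‖ ≤ |Aux.A l' k| * (Cm * Cn) * t ^ (l + k - 1) := by
    intro k t ht
    have ht' : t ∈ Set.Icc (0:ℝ) 1 := ⟨ht.1.le, ht.2.le⟩
    have h1 : 0 ≤ t ^ (l + (k:ℝ) - 1) := Real.rpow_nonneg ht.1.le _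
    have h2 : |t ^ (l + (k:ℝ) - 1) * Rm t * Rn t| ≤ t ^ (l + (k:ℝ) - 1) * (Cm * Cn) := by
      rw [abs_mul, abs_mul, abs_of_nonneg h1]
      calc t ^ (l + (k:ℝ) - 1) * |Rm t| * |Rn t|
          ≤ (t ^ (l + (k:ℝ) - 1) * Cm) * Cn :=
            mul_le_mul (mul_le_mul_of_nonneg_left (hRmb t ht') h1) (hRnb t ht')
              (abs_nonneg _) (mul_nonneg h1 hCm0)
        _ = t ^ (l + (k:ℝ) - 1) * (Cm * Cn) := by ring
    calc ‖F k t‖ = |Aux.A l' k| * |t ^ (l + (k:ℝ) - 1) * Rm t * Rn t| := by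
          rw [hF, Real.norm_eq_abs, abs_mul]; rfl
      _ ≤ |Aux.A l' k| * (t ^ (l + (k:ℝ) - 1) * (Cm * Cn)) :=
          mul_le_mul_of_nonneg_left h2 (abs_nonneg _)
      _ = |Aux.A l' k| * (Cm * Cn) * t ^ (l + (k:ℝ) - 1) := by ring
  have hbd_int : ∀ k : ℕ, Integrable
      (fun t : ℝ => |Aux.A l' k| * (Cm * Cn) * t ^ (l + k - 1)) μ :=
    fun k => (hrpow_int _ (hexp k)).const_mul _
  have hFae : ∀ k, AEStronglyMeasurable (F k) μ := by
    intro k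
    apply AEStronglyMeasurable.const_mul
    exact ((((hrpow_cont _).aestronglyMeasurable measurableSet_Ioo).mul hRmae).mul hRnae)
  have hbdae : ∀ k : ℕ, ∀ᵐ t ∂μ, ‖F k t‖ ≤ |Aux.A l' k| * (Cm * Cn) * t ^ (l + k - 1) := by
    intro k
    rw [hμ]
    exact (ae_restrict_iff' measurableSet_Ioo).2
      (Filter.Eventually.of_forall (fun t ht => habs_bd k t ht))
  have hFint : ∀ k, Integrable (F k) μ := fun k =>
    Integrable.mono' (hbd_int k) (hFae k) (hbdae k)
  have hnormint : ∀ k, (∫ t, ‖F k t‖ ∂μ) ≤ |Aux.A l' k| / (l + k) * (Cm * Cn) := by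
    intro k
    have h1 : (∫ t, ‖F k t‖ ∂μ) ≤ ∫ t, |Aux.A l' k| * (Cm * Cn) * t ^ (l + k - 1) ∂μ :=
      integral_mono_ae (hFint k).norm (hbd_int k) (hbdae k)
    have h2 : (∫ t, |Aux.A l' k| * (Cm * Cn) * t ^ (l + k - 1) ∂μ)
        = |Aux.A l' k| * (Cm * Cn) * (1 / (l + k)) := by
      rw [hμ, integral_const_mul]
      rw [show (∫ t in Set.Ioo (0:ℝ) 1, t ^ (l + k - 1)) = 1 / (l + k - 1 + 1) from
        hrpow_val _ (hexp k)]
      rw [show l + (k:ℝ) - 1 + 1 = l + k by ring]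
    rw [h2] at h1
    calc (∫ t, ‖F k t‖ ∂μ) ≤ |Aux.A l' k| * (Cm * Cn) * (1 / (l + k)) := h1
      _ = |Aux.A l' k| / (l + k) * (Cm * Cn) := by ring
  have hsumnorm : Summable (fun k => ∫ t, ‖F k t‖ ∂μ) := by
    apply Summable.of_nonneg_of_le
      (fun k => integral_nonneg (fun t => norm_nonneg _)) hnormint
    exact (summable_absA_div hl' hl).mul_right (Cm * Cn)
  have hHS := MeasureTheory.hasSum_integral_of_summable_integral_norm hFint hsumnorm
  have hJ : ∀ k, (∫ t, F k t ∂μ) = poch (1 - l') k / (Nat.factorial k) *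
      ∫ t in (0:ℝ)..1, t ^ (l + k - 1) * Rm t * Rn t := by
    intro k
    rw [hμ, hF, integral_const_mul,
      intervalIntegral.integral_of_le zero_le_one,
      MeasureTheory.integral_Ioc_eq_integral_Ioo]
  have hpt : ∀ t ∈ Set.Ioo (0:ℝ) 1,
      (∑' k, F k t) = t ^ (l - 1) * (1 - t) ^ (l' - 1) * Rm t * Rn t := by
    intro t ht
    have hbin := hasSum_binomial hl' ht.1.le ht.2
    have hsplit : ∀ k : ℕ, F k t = (t ^ (l - 1) * Rm t * Rn t) * (Aux.A l' k * t ^ k) := by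
      intro k
      have hpow : t ^ (l + (k:ℝ) - 1) = t ^ (l - 1) * t ^ (k : ℕ) := by
        rw [← Real.rpow_natCast t k, ← Real.rpow_add ht.1]
        congr 1
        ring
      rw [hF]
      show poch (1 - l') k / (Nat.factorial k) * (t ^ (l + (k:ℝ) - 1) * Rm t * Rn t) = _
      rw [hpow, Aux.A]
      ring
    calc (∑' k, F k t) = ∑' k, (t ^ (l - 1) * Rm t * Rn t) * (Aux.A l' k * t ^ k) :=
          tsum_congr hsplit
      _ = (t ^ (l - 1) * Rm t * Rn t) * ∑' k, Aux.A l' k * t ^ k := tsum_mul_left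
      _ = (t ^ (l - 1) * Rm t * Rn t) * (1 - t) ^ (l' - 1) := by rw [hbin.tsum_eq]
      _ = t ^ (l - 1) * (1 - t) ^ (l' - 1) * Rm t * Rn t := by ring
  have hIsum : (∫ t, (∑' k, F k t) ∂μ)
      = ∫ t in (0:ℝ)..1, t ^ (l - 1) * (1 - t) ^ (l' - 1) * Rm t * Rn t := by
    rw [intervalIntegral.integral_of_le zero_le_one,
      MeasureTheory.integral_Ioc_eq_integral_Ioo, hμ]
    exact MeasureTheory.setIntegral_congr_fun measurableSet_Ioo (fun t ht => hpt t ht)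
  have hterm : ∀ k : ℕ, poch (1 - l') k / ((Nat.factorial k) * (l + k)) *
      ((l + k) * ∫ t in (0:ℝ)..1, t ^ (l + k - 1) * Rm t * Rn t) = ∫ t, F k t ∂μ := by
    intro k
    rw [hJ k]
    have h1 : ((Nat.factorial k : ℝ)) ≠ 0 := Nat.cast_ne_zero.2 (Nat.factorial_ne_zero k)
    have h2 : (l + (k:ℝ)) ≠ 0 := (hlk k).ne'
    field_simp
  constructor
  · exact (hHS.summable).congr (fun k => (hterm k).symm)
  · have hcal : calB l l' m m' n n' = (betaFn l l')⁻¹ *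
        ∫ t in (0:ℝ)..1, t ^ (l - 1) * (1 - t) ^ (l' - 1) * Rm t * Rn t := rfl
    rw [hcal]
    congr 1
    calc (∫ t in (0:ℝ)..1, t ^ (l - 1) * (1 - t) ^ (l' - 1) * Rm t * Rn t)
        = ∫ t, (∑' k, F k t) ∂μ := hIsum.symm
      _ = ∑' k, ∫ t, F k t ∂μ := hHS.tsum_eq.symm
      _ = _ := tsum_congr (fun k => (hterm k).symm)
end

section
/- For all positive reals μ and ν, ∫₀¹ I(μ,μ;t) I(ν,ν;t) dt = 1/2 − (μ+ν) B(μ+ν, μ+ν+1) / (4 μ ν B(μ,μ+1) B(ν,ν+1)). -/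
open MeasureTheory

open intervalIntegral Set

section Aux

variable {a b c t : ℝ}

lemma betaInt_left (ha : 0 < a) (b : ℝ) :
    IntervalIntegrable (fun s : ℝ => s ^ (a-1) * (1-s) ^ (b-1)) volume 0 (1/2) := by
  apply IntervalIntegrable.mul_continuousOn
  · exact intervalIntegral.intervalIntegrable_rpow' (by linarith)
  · apply continuousOn_of_forall_continuousAt
    intro x hx
    rw [uIcc_of_le (by norm_num : (0:ℝ) ≤ 1/2)] at hx
    exact (continuous_const.sub continuous_id).continuousAt.rpow_const
      (Or.inl (by simp only [Pi.sub_apply, id]; intro h; nlinarith [hx.2, h]))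

lemma betaInt (ha : 0 < a) (hb : 0 < b) :
    IntervalIntegrable (fun s : ℝ => s ^ (a-1) * (1-s) ^ (b-1)) volume 0 1 := by
  refine (betaInt_left ha b).trans ?_
  have h := ((betaInt_left hb a).comp_sub_left 1).symm
  have he : (fun x : ℝ => (1-x) ^ (b-1) * (1-(1-x)) ^ (a-1)) =
      (fun s : ℝ => s ^ (a-1) * (1-s) ^ (b-1)) := by
    funext x; simp only [sub_sub_cancel]; ring
  rw [he] at h
  norm_num at h
  exact h

lemma beta_pos (ha : 0 < a) (hb : 0 < b) : 0 < betaFn a b := by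
  apply intervalIntegral.intervalIntegral_pos_of_pos_on (betaInt ha hb)
  · intro x hx
    have h1 : (0:ℝ) < x := hx.1
    have h2 : (0:ℝ) < 1 - x := by linarith [hx.2]
    positivity
  · norm_num

lemma betaFn_symm (a b : ℝ) : betaFn a b = betaFn b a := by
  unfold betaFn
  have h := intervalIntegral.integral_comp_sub_left
    (a := 0) (b := 1) (fun s : ℝ => s ^ (b-1) * (1-s) ^ (a-1)) 1
  norm_num at h
  rw [← h]
  apply intervalIntegral.integral_congr
  intro x _
  simp only [sub_sub_cancel]
  ring

lemma betaFn_succ (ha : 0 < a) : betaFn a (a+1) = betaFn a a / 2 := by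
  have hsplit : betaFn a a = betaFn a (a+1) + betaFn (a+1) a := by
    unfold betaFn
    have h1 : IntervalIntegrable (fun s : ℝ => s ^ (a-1) * (1-s) ^ ((a+1)-1)) volume 0 1 :=
      betaInt ha (by linarith)
    have h2 : IntervalIntegrable (fun s : ℝ => s ^ ((a+1)-1) * (1-s) ^ (a-1)) volume 0 1 :=
      betaInt (by linarith) ha
    rw [← intervalIntegral.integral_add h1 h2]
    apply intervalIntegral.integral_congr
    intro x hx
    rw [uIcc_of_le (by norm_num : (0:ℝ) ≤ 1)] at hx
    have hx0 := hx.1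
    have hx1 := hx.2
    rcases eq_or_lt_of_le hx0 with h0 | h0
    · simp only [← h0, Real.zero_rpow (by linarith : (a+1)-1 ≠ 0), sub_zero, Real.one_rpow]
      ring
    rcases eq_or_lt_of_le hx1 with h1 | h1
    · simp only [h1, Real.one_rpow, sub_self, Real.zero_rpow (by linarith : (a+1)-1 ≠ 0)]
      ring
    · have e1 : x ^ ((a+1)-1) = x ^ (a-1) * x := by
        rw [show (a+1)-1 = (a-1)+1 by ring, Real.rpow_add_one (by linarith)]
      have e2 : (1-x) ^ ((a+1)-1) = (1-x) ^ (a-1) * (1-x) := by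
        rw [show (a+1)-1 = (a-1)+1 by ring, Real.rpow_add_one (by linarith)]
      simp only []
      rw [e1, e2]; ring
  have hrefl : betaFn (a+1) a = betaFn a (a+1) := betaFn_symm _ _
  linarith

lemma regIncBeta_contOn (ha : 0 < a) (hb : 0 < b) :
    ContinuousOn (regIncBeta a b) (Icc 0 1) := by
  apply ContinuousOn.mul continuousOn_const
  have h := intervalIntegral.continuousOn_primitive_interval
    (a := 0) (b := 1) (μ := volume)
    (f := fun s : ℝ => s ^ (a-1) * (1-s) ^ (b-1))
    (by rw [← intervalIntegrable_iff']; exact betaInt ha hb)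
  rwa [uIcc_of_le (by norm_num : (0:ℝ) ≤ 1)] at h

lemma regIncBeta_deriv (ha : 0 < a) (hb : 0 < b) (ht : t ∈ Ioo (0:ℝ) 1) :
    HasDerivAt (regIncBeta a b) ((betaFn a b)⁻¹ * (t ^ (a-1) * (1-t) ^ (b-1))) t := by
  apply HasDerivAt.const_mul
  apply intervalIntegral.integral_hasDerivAt_right
  · apply (betaInt ha hb).mono_set
    rw [uIcc_of_le (by norm_num : (0:ℝ) ≤ 1), uIcc_of_le ht.1.le]
    exact Icc_subset_Icc le_rfl ht.2.le
  · have hcont : ContinuousOn (fun s : ℝ => s ^ (a-1) * (1-s) ^ (b-1)) (Ioo 0 1) := by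
      intro x hx
      apply ContinuousAt.continuousWithinAt
      exact (continuousAt_id.rpow_const (Or.inl hx.1.ne')).mul
        ((continuous_const.sub continuous_id).continuousAt.rpow_const
          (Or.inl (by simp only [Pi.sub_apply, id]; intro h; nlinarith [hx.2, h])))
    exact hcont.stronglyMeasurableAtFilter isOpen_Ioo t ht
  · exact (continuousAt_id.rpow_const (Or.inl ht.1.ne')).mul
      ((continuous_const.sub continuous_id).continuousAt.rpow_const
        (Or.inl (by simp only [Pi.sub_apply, id]; intro h; nlinarith [ht.2, h])))

/-- The auxiliary antiderivative of `I(a,a;·) - 1/2`. -/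
noncomputable def Gfn (a t : ℝ) : ℝ :=
  (t-1/2)*(regIncBeta a a t - 1/2) + (t*(1-t))^a/(2*a*betaFn a a)

lemma q_deriv (c : ℝ) (ht : t ∈ Ioo (0:ℝ) 1) :
    HasDerivAt (fun t : ℝ => (t*(1-t))^c) (c * (t*(1-t))^(c-1) * (1-2*t)) t := by
  have hb : HasDerivAt (fun t : ℝ => t*(1-t)) (1-2*t) t := by
    have := (hasDerivAt_id t).mul ((hasDerivAt_const t 1).sub (hasDerivAt_id t))
    simp only [Pi.sub_apply, id] at this
    refine this.congr_deriv ?_; ring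
  have hne : t*(1-t) ≠ 0 := by nlinarith [ht.1, ht.2]
  have := hb.rpow_const (p := c) (Or.inl hne)
  convert this using 1; ring

lemma q_cont (hc : 0 ≤ c) : Continuous (fun t : ℝ => (t*(1-t))^c) :=
  (continuous_id.mul (continuous_const.sub continuous_id)).rpow_const (fun _ => Or.inr hc)

lemma mul_rpow_of_mem (hc : t ∈ Icc (0:ℝ) 1) (c : ℝ) :
    (t*(1-t))^c = t^c * (1-t)^c :=
  Real.mul_rpow hc.1 (by linarith [hc.2])

lemma q_int (hc : 0 < c) :
    IntervalIntegrable (fun t : ℝ => (t*(1-t))^(c-1)) volume 0 1 := by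
  rw [intervalIntegrable_iff', uIcc_of_le (by norm_num : (0:ℝ) ≤ 1)]
  have h : IntegrableOn (fun s : ℝ => s ^ (c-1) * (1-s) ^ (c-1)) (Icc 0 1) volume := by
    rw [← uIcc_of_le (by norm_num : (0:ℝ) ≤ 1), ← intervalIntegrable_iff']
    exact betaInt hc hc
  exact h.congr_fun (fun x hx => (mul_rpow_of_mem hx (c-1)).symm) measurableSet_Icc

lemma q_int_eq (hc : 0 < c) :
    ∫ t in (0:ℝ)..1, (t*(1-t))^(c-1) = betaFn c c := by
  apply intervalIntegral.integral_congr
  intro x hx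
  rw [uIcc_of_le (by norm_num : (0:ℝ) ≤ 1)] at hx
  exact mul_rpow_of_mem hx (c-1)

lemma G_deriv (ha : 0 < a) (ht : t ∈ Ioo (0:ℝ) 1) :
    HasDerivAt (Gfn a) (regIncBeta a a t - 1/2) t := by
  have hB := beta_pos ha ha
  have hBne : betaFn a a ≠ 0 := ne_of_gt hB
  have h1 : HasDerivAt (fun t : ℝ => (t-1/2)*(regIncBeta a a t - 1/2))
      (1*(regIncBeta a a t - 1/2) + (t-1/2)*((betaFn a a)⁻¹ * (t ^ (a-1) * (1-t) ^ (a-1)))) t :=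
    ((hasDerivAt_id t).sub_const (1/2)).mul ((regIncBeta_deriv ha ha ht).sub_const (1/2))
  have h2 : HasDerivAt (fun t : ℝ => (t*(1-t))^a/(2*a*betaFn a a))
      ((a * (t*(1-t))^(a-1) * (1-2*t))/(2*a*betaFn a a)) t :=
    (q_deriv a ht).div_const _
  have h := h1.add h2
  have hq : (t*(1-t))^(a-1) = t^(a-1) * (1-t)^(a-1) :=
    mul_rpow_of_mem (Ioo_subset_Icc_self ht) (a-1)
  refine h.congr_deriv ?_
  rw [hq]
  field_simp
  ring

lemma G_cont (ha : 0 < a) : ContinuousOn (Gfn a) (Icc 0 1) := by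
  apply ContinuousOn.add
  · exact ((continuousOn_id.sub continuousOn_const).mul
      ((regIncBeta_contOn ha ha).sub continuousOn_const))
  · exact ((q_cont ha.le).continuousOn.div_const _)

lemma regIncBeta_zero : regIncBeta a b 0 = 0 := by
  simp [regIncBeta]

lemma regIncBeta_one (ha : 0 < a) (hb : 0 < b) : regIncBeta a b 1 = 1 := by
  have := beta_pos ha hb
  rw [regIncBeta]
  exact inv_mul_cancel₀ (ne_of_gt this)

lemma G_zero (ha : 0 < a) : Gfn a 0 = 1/4 := by
  simp [Gfn, regIncBeta_zero, Real.zero_rpow (ne_of_gt ha)]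
  norm_num

lemma G_one (ha : 0 < a) : Gfn a 1 = 1/4 := by
  simp [Gfn, regIncBeta_one ha ha, Real.zero_rpow (ne_of_gt ha)]
  norm_num

lemma int_I_sub_half (ha : 0 < a) :
    ∫ t in (0:ℝ)..1, (regIncBeta a a t - 1/2) = 0 := by
  have hI : IntervalIntegrable (fun t : ℝ => regIncBeta a a t - 1/2) volume 0 1 := by
    apply ContinuousOn.intervalIntegrable
    rw [uIcc_of_le (by norm_num : (0:ℝ) ≤ 1)]
    exact (regIncBeta_contOn ha ha).sub continuousOn_const
  have h := intervalIntegral.integral_eq_sub_of_hasDeriv_right_of_le (by norm_num : (0:ℝ) ≤ 1)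
    (G_cont ha) (fun x hx => (G_deriv ha hx).hasDerivWithinAt) hI
  rw [h, G_zero ha, G_one ha]
  ring

lemma Phi_deriv {m n : ℝ} (hm : 0 < m) (hn : 0 < n) (ht : t ∈ Ioo (0:ℝ) 1) :
    HasDerivAt (fun t => Gfn m t * (regIncBeta n n t - 1/2) + Gfn n t * (regIncBeta m m t - 1/2)
      - (t-1/2)*(regIncBeta m m t - 1/2)*(regIncBeta n n t - 1/2))
      ((regIncBeta m m t - 1/2)*(regIncBeta n n t - 1/2)
        + (m+n)/(2*m*n*(betaFn m m * betaFn n n)) * (t*(1-t))^(m+n-1)) t := by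
  have hIm := regIncBeta_deriv hm hm ht
  have hIn := regIncBeta_deriv hn hn ht
  have h1 := (G_deriv hm ht).mul (hIn.sub_const (1/2))
  have h2 := (G_deriv hn ht).mul (hIm.sub_const (1/2))
  have h3 := (((hasDerivAt_id t).sub_const (1/2)).mul (hIm.sub_const (1/2))).mul
    (hIn.sub_const (1/2))
  have raw := (h1.add h2).sub h3
  refine raw.congr_deriv ?_
  have hP : 0 < t*(1-t) := by nlinarith [ht.1, ht.2]
  have hqm : t^(m-1)*(1-t)^(m-1) = (t*(1-t))^(m-1) :=
    (mul_rpow_of_mem (Ioo_subset_Icc_self ht) (m-1)).symm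
  have hqn : t^(n-1)*(1-t)^(n-1) = (t*(1-t))^(n-1) :=
    (mul_rpow_of_mem (Ioo_subset_Icc_self ht) (n-1)).symm
  have hPm : (t*(1-t))^m = (t*(1-t))^(m-1) * (t*(1-t)) := by
    rw [← Real.rpow_add_one (ne_of_gt hP)]; norm_num
  have hPn : (t*(1-t))^n = (t*(1-t))^(n-1) * (t*(1-t)) := by
    rw [← Real.rpow_add_one (ne_of_gt hP)]; norm_num
  have hPmn : (t*(1-t))^(m+n-1) = (t*(1-t))^(m-1) * (t*(1-t))^(n-1) * (t*(1-t)) := by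
    rw [← Real.rpow_add hP, ← Real.rpow_add_one (ne_of_gt hP)]; ring_nf
  have hBm := ne_of_gt (beta_pos hm hm)
  have hBn := ne_of_gt (beta_pos hn hn)
  simp only [Gfn, hqm, hqn, hPm, hPn, hPmn, id, Pi.mul_apply, Pi.sub_apply]
  field_simp
  ring

end Aux

/-- inner product of symmetric regularized incomplete beta functions. -/
theorem stmt9 (m n : ℝ) (hm : 0 < m) (hn : 0 < n) :
    ∫ t in (0:ℝ)..1, regIncBeta m m t * regIncBeta n n t =
      1 / 2 - (m + n) * betaFn (m + n) (m + n + 1) /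
        (4 * m * n * betaFn m (m + 1) * betaFn n (n + 1)) := by
  have hmn : 0 < m + n := by linarith
  have hBm := beta_pos hm hm
  have hBn := beta_pos hn hn
  have hBmn := beta_pos hmn hmn
  have hu : uIcc (0:ℝ) 1 = Icc 0 1 := uIcc_of_le (by norm_num)
  have hcm : ContinuousOn (fun t => regIncBeta m m t - 1/2) (Icc (0:ℝ) 1) :=
    (regIncBeta_contOn hm hm).sub continuousOn_const
  have hcn : ContinuousOn (fun t => regIncBeta n n t - 1/2) (Icc (0:ℝ) 1) :=
    (regIncBeta_contOn hn hn).sub continuousOn_const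
  have hint_fg : IntervalIntegrable
      (fun t => (regIncBeta m m t - 1/2)*(regIncBeta n n t - 1/2)) volume 0 1 := by
    apply ContinuousOn.intervalIntegrable; rw [hu]; exact hcm.mul hcn
  have hint_q : IntervalIntegrable
      (fun t : ℝ => (m+n)/(2*m*n*(betaFn m m * betaFn n n)) * (t*(1-t))^(m+n-1)) volume 0 1 :=
    (q_int hmn).const_mul _
  have hPhi : (∫ t in (0:ℝ)..1, ((regIncBeta m m t - 1/2)*(regIncBeta n n t - 1/2)
      + (m+n)/(2*m*n*(betaFn m m * betaFn n n)) * (t*(1-t))^(m+n-1))) = 1/4 := by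
    have hcont : ContinuousOn (fun t => Gfn m t * (regIncBeta n n t - 1/2)
        + Gfn n t * (regIncBeta m m t - 1/2)
        - (t-1/2)*(regIncBeta m m t - 1/2)*(regIncBeta n n t - 1/2)) (Icc (0:ℝ) 1) := by
      exact (((G_cont hm).mul hcn).add ((G_cont hn).mul hcm)).sub
        (((continuousOn_id.sub continuousOn_const).mul hcm).mul hcn)
    have h := intervalIntegral.integral_eq_sub_of_hasDeriv_right_of_le
      (by norm_num : (0:ℝ) ≤ 1) hcont
      (fun x hx => (Phi_deriv hm hn hx).hasDerivWithinAt)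
      (hint_fg.add hint_q)
    rw [h, G_zero hm, G_zero hn, G_one hm, G_one hn,
      regIncBeta_zero, regIncBeta_zero, regIncBeta_one hm hm, regIncBeta_one hn hn]
    norm_num
  have hsplit : (∫ t in (0:ℝ)..1, ((regIncBeta m m t - 1/2)*(regIncBeta n n t - 1/2)
      + (m+n)/(2*m*n*(betaFn m m * betaFn n n)) * (t*(1-t))^(m+n-1)))
      = (∫ t in (0:ℝ)..1, (regIncBeta m m t - 1/2)*(regIncBeta n n t - 1/2))
        + (m+n)/(2*m*n*(betaFn m m * betaFn n n)) * betaFn (m+n) (m+n) := by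
    rw [intervalIntegral.integral_add hint_fg hint_q,
      intervalIntegral.integral_const_mul, q_int_eq hmn]
  have hfg : (∫ t in (0:ℝ)..1, (regIncBeta m m t - 1/2)*(regIncBeta n n t - 1/2))
      = 1/4 - (m+n)/(2*m*n*(betaFn m m * betaFn n n)) * betaFn (m+n) (m+n) := by
    rw [hsplit] at hPhi; linarith
  have hint_m : IntervalIntegrable (fun t => regIncBeta m m t - 1/2) volume 0 1 := by
    apply ContinuousOn.intervalIntegrable; rw [hu]; exact hcm
  have hint_n : IntervalIntegrable (fun t => regIncBeta n n t - 1/2) volume 0 1 := by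
    apply ContinuousOn.intervalIntegrable; rw [hu]; exact hcn
  have hexp : (∫ t in (0:ℝ)..1, regIncBeta m m t * regIncBeta n n t)
      = (∫ t in (0:ℝ)..1, ((regIncBeta m m t - 1/2)*(regIncBeta n n t - 1/2)
          + ((1/2) * (regIncBeta m m t - 1/2) + ((1/2) * (regIncBeta n n t - 1/2) + 1/4)))) := by
    apply intervalIntegral.integral_congr
    intro x _; simp only []; ring
  rw [hexp, intervalIntegral.integral_add hint_fg
      ((hint_m.const_mul _).add ((hint_n.const_mul _).add intervalIntegrable_const)),
    intervalIntegral.integral_add (hint_m.const_mul _)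
      ((hint_n.const_mul _).add intervalIntegrable_const),
    intervalIntegral.integral_add (hint_n.const_mul _) intervalIntegrable_const,
    intervalIntegral.integral_const_mul, intervalIntegral.integral_const_mul,
    int_I_sub_half hm, int_I_sub_half hn, hfg, intervalIntegral.integral_const]
  rw [betaFn_succ hm, betaFn_succ hn, show m+n+1 = (m+n)+1 by ring, betaFn_succ hmn]
  have hBmne := ne_of_gt hBm
  have hBnne := ne_of_gt hBn
  field_simp
  ring
end

section
/- For all positive reals μ and ν, ∫₀¹ I(μ,μ+1;t) I(ν,ν+1;t) dt = (4μν + 3(μ+ν) + 2)/(2(2μ+1)(2ν+1)) − (μ+ν) B(μ+ν+1, μ+ν+2) / (μν B(μ,μ+1) B(ν,ν+1)). -/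
open MeasureTheory Set

namespace Stmt10Aux

lemma betaInt {p q : ℝ} (hp : -1 < p) (hq : -1 < q) :
    IntervalIntegrable (fun t : ℝ => t ^ p * (1 - t) ^ q) volume 0 1 := by
  have h := Complex.betaIntegral_convergent (u := (p : ℂ) + 1) (v := (q : ℂ) + 1)
    (by simp; linarith) (by simp; linarith)
  rw [intervalIntegrable_iff] at h ⊢
  rw [uIoc_of_le (by norm_num : (0:ℝ) ≤ 1)] at h ⊢
  refine (h.re).congr ((ae_restrict_iff' measurableSet_Ioc).2 (Filter.Eventually.of_forall
    fun x hx => ?_))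
  have hx0 : (0:ℝ) ≤ x := hx.1.le
  have hx1 : (0:ℝ) ≤ 1 - x := by linarith [hx.2]
  simp only [add_sub_cancel_right]
  rw [show (1 : ℂ) - (x:ℂ) = ((1 - x : ℝ) : ℂ) by push_cast; ring]
  rw [← Complex.ofReal_cpow hx0, ← Complex.ofReal_cpow hx1, ← Complex.ofReal_mul]
  simp

lemma betaFn_eq_gamma {a b : ℝ} (ha : 0 < a) (hb : 0 < b) :
    betaFn a b = Real.Gamma a * Real.Gamma b / Real.Gamma (a + b) := by
  have key : Complex.betaIntegral (a : ℂ) (b : ℂ) = ((betaFn a b : ℝ) : ℂ) := by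
    rw [Complex.betaIntegral, betaFn]
    rw [← intervalIntegral.integral_ofReal]
    refine intervalIntegral.integral_congr fun x hx => ?_
    rw [uIcc_of_le (by norm_num : (0:ℝ) ≤ 1)] at hx
    have hx0 : (0:ℝ) ≤ x := hx.1
    have hx1 : (0:ℝ) ≤ 1 - x := by linarith [hx.2]
    rw [show (1 : ℂ) - (x:ℂ) = ((1 - x : ℝ) : ℂ) by push_cast; ring,
      show ((a:ℂ) - 1) = ((a - 1 : ℝ) : ℂ) by push_cast; ring,
      show ((b:ℂ) - 1) = ((b - 1 : ℝ) : ℂ) by push_cast; ring,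
      ← Complex.ofReal_cpow hx0, ← Complex.ofReal_cpow hx1, ← Complex.ofReal_mul]
  have h2 := Complex.Gamma_mul_Gamma_eq_betaIntegral (s := (a:ℂ)) (t := (b:ℂ))
    (by simpa using ha) (by simpa using hb)
  rw [key] at h2
  have h3 : ((Real.Gamma a * Real.Gamma b : ℝ) : ℂ) = ((Real.Gamma (a+b) * betaFn a b : ℝ) : ℂ) := by
    push_cast
    rw [← Complex.Gamma_ofReal, ← Complex.Gamma_ofReal, ← Complex.Gamma_ofReal]
    push_cast
    exact h2
  have h4 := Complex.ofReal_inj.1 h3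
  have hG : Real.Gamma (a + b) ≠ 0 := (Real.Gamma_pos_of_pos (by linarith)).ne'
  field_simp
  linarith [h4]

lemma betaFn_pos {a b : ℝ} (ha : 0 < a) (hb : 0 < b) : 0 < betaFn a b := by
  rw [betaFn_eq_gamma ha hb]
  have := Real.Gamma_pos_of_pos ha
  have := Real.Gamma_pos_of_pos hb
  have := Real.Gamma_pos_of_pos (show 0 < a + b by linarith)
  positivity

lemma betaFn_succ_succ {a : ℝ} (ha : 0 < a) :
    (2 * a + 1) * betaFn (a + 1) (a + 1) = a * betaFn a (a + 1) := by
  rw [betaFn_eq_gamma (by linarith) (by linarith), betaFn_eq_gamma ha (by linarith)]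
  have g1 : Real.Gamma (a + 1) = a * Real.Gamma a := Real.Gamma_add_one ha.ne'
  have g2 : Real.Gamma (2 * a + 1) = 2 * a * Real.Gamma (2 * a) :=
    Real.Gamma_add_one (by positivity)
  have g3 : Real.Gamma (2 * a + 1 + 1) = (2 * a + 1) * Real.Gamma (2 * a + 1) :=
    Real.Gamma_add_one (by positivity)
  rw [show a + 1 + (a + 1) = 2 * a + 1 + 1 by ring, show a + (a + 1) = 2 * a + 1 by ring,
    g3, g2, g1]
  have h1 : Real.Gamma (2 * a) ≠ 0 := (Real.Gamma_pos_of_pos (by linarith)).ne'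
  field_simp

lemma betaFn_self_eq {c : ℝ} (hc : 0 < c) : betaFn c c = 2 * betaFn c (c + 1) := by
  rw [betaFn_eq_gamma hc hc, betaFn_eq_gamma hc (by linarith)]
  have g1 : Real.Gamma (c + 1) = c * Real.Gamma c := Real.Gamma_add_one hc.ne'
  have g2 : Real.Gamma (2 * c + 1) = 2 * c * Real.Gamma (2 * c) :=
    Real.Gamma_add_one (by positivity)
  rw [show c + (c + 1) = 2 * c + 1 by ring, show c + c = 2 * c by ring, g2, g1]
  have h1 : Real.Gamma (2 * c) ≠ 0 := (Real.Gamma_pos_of_pos (by linarith)).ne'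
  have h2 : Real.Gamma c ≠ 0 := (Real.Gamma_pos_of_pos hc).ne'
  field_simp

/-- The incomplete beta-type primitive. -/
noncomputable def P (p q t : ℝ) : ℝ := ∫ s in (0:ℝ)..t, s ^ p * (1 - s) ^ q

lemma P_zero (p q : ℝ) : P p q 0 = 0 := by simp [P]

lemma Pint {p q : ℝ} (hp : -1 < p) (hq : -1 < q) {x y : ℝ}
    (hx : x ∈ Icc (0:ℝ) 1) (hy : y ∈ Icc (0:ℝ) 1) :
    IntervalIntegrable (fun t : ℝ => t ^ p * (1 - t) ^ q) volume x y := by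
  refine (betaInt hp hq).mono_set ?_
  rw [uIcc_of_le (by norm_num : (0:ℝ) ≤ 1)]
  exact uIcc_subset_Icc hx hy

lemma P_cont {p q : ℝ} (hp : -1 < p) (hq : -1 < q) : ContinuousOn (P p q) (Icc 0 1) := by
  have h := intervalIntegral.continuousOn_primitive_interval' (betaInt hp hq)
    (a := 0) (by rw [uIcc_of_le (by norm_num : (0:ℝ) ≤ 1)]; exact ⟨le_refl _, by norm_num⟩)
  rwa [uIcc_of_le (by norm_num : (0:ℝ) ≤ 1)] at h

lemma P_deriv {p q : ℝ} (hp : -1 < p) (hq : -1 < q) {t : ℝ} (ht : t ∈ Ioo (0:ℝ) 1) :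
    HasDerivAt (P p q) (t ^ p * (1 - t) ^ q) t := by
  have hc : ∀ x ∈ Ioo (0:ℝ) 1, ContinuousAt (fun t : ℝ => t ^ p * (1 - t) ^ q) x := by
    intro x hx
    exact (Real.continuousAt_rpow_const x p (Or.inl hx.1.ne')).mul
      (((continuous_const.sub continuous_id).continuousAt).rpow_const
        (Or.inl (by intro h; simp only [Pi.sub_apply, id_eq] at h; nlinarith [hx.2, sub_eq_zero.1 h])))
  exact intervalIntegral.integral_hasDerivAt_right
    (Pint hp hq ⟨le_refl _, by norm_num⟩ ⟨ht.1.le, ht.2.le⟩)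
    (ContinuousAt.stronglyMeasurableAtFilter isOpen_Ioo hc t ht) (hc t ht)

lemma ibp (u v u' v' : ℝ → ℝ)
    (hu_c : ContinuousOn u (Icc 0 1)) (hv_c : ContinuousOn v (Icc 0 1))
    (hu : ∀ t ∈ Ioo (0:ℝ) 1, HasDerivAt u (u' t) t)
    (hv : ∀ t ∈ Ioo (0:ℝ) 1, HasDerivAt v (v' t) t)
    (h1 : IntervalIntegrable (fun t => u' t * v t) volume 0 1)
    (h2 : IntervalIntegrable (fun t => u t * v' t) volume 0 1) :
    ∫ t in (0:ℝ)..1, u t * v' t = u 1 * v 1 - u 0 * v 0 - ∫ t in (0:ℝ)..1, u' t * v t := by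
  have key := intervalIntegral.integral_eq_sub_of_hasDeriv_right (a := (0:ℝ)) (b := 1)
    (f := fun t => u t * v t) (f' := fun t => u' t * v t + u t * v' t)
    (by rw [uIcc_of_le (by norm_num : (0:ℝ) ≤ 1)]; exact hu_c.mul hv_c)
    (by
      intro x hx
      rw [show min (0:ℝ) 1 = 0 by norm_num, show max (0:ℝ) 1 = 1 by norm_num] at hx
      exact (((hu x hx).mul (hv x hx))).hasDerivWithinAt)
    (h1.add h2)
  rw [intervalIntegral.integral_add h1 h2] at key
  linarith

lemma integral_comp_one_sub (f : ℝ → ℝ) :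
    ∫ t in (0:ℝ)..1, f (1 - t) = ∫ t in (0:ℝ)..1, f t := by
  simpa using intervalIntegral.integral_comp_sub_left (a := (0:ℝ)) (b := 1) f 1

lemma qq_cont {a : ℝ} (ha : 0 < a) : Continuous (fun t : ℝ => t ^ a * (1 - t) ^ a) :=
  (Real.continuous_rpow_const ha.le).mul
    ((continuous_const.sub continuous_id).rpow_const (fun _ => Or.inr ha.le))

lemma qq_deriv {a : ℝ} (ha : 0 < a) {t : ℝ} (ht : t ∈ Ioo (0:ℝ) 1) :
    HasDerivAt (fun t : ℝ => t ^ a * (1 - t) ^ a)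
      (a * (t ^ (a - 1) * (1 - t) ^ a) - a * (t ^ a * (1 - t) ^ (a - 1))) t := by
  have d1 : HasDerivAt (fun x : ℝ => x ^ a) (a * t ^ (a - 1)) t :=
    Real.hasDerivAt_rpow_const (Or.inl ht.1.ne')
  have d2 : HasDerivAt (fun x : ℝ => (1 - x) ^ a) ((-1) * a * (1 - t) ^ (a - 1)) t :=
    ((hasDerivAt_id t).const_sub 1).rpow_const (Or.inl (by
      simp only [id_eq]; intro h; nlinarith [ht.2, sub_eq_zero.1 h]))
  have := d1.fun_mul d2
  refine this.congr_deriv ?_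
  ring

lemma S6 {a b : ℝ} (ha : 0 < a) (hb : 0 < b) :
    ∫ t in (0:ℝ)..1, P (a-1) (a-1) t * (t ^ b * (1 - t) ^ b) =
      1 / 2 * (P (a-1) (a-1) 1 * P b b 1) := by
  have hp : (-1:ℝ) < a - 1 := by linarith
  have hicc : uIcc (0:ℝ) 1 = Icc 0 1 := uIcc_of_le (by norm_num)
  have hcontP : ContinuousOn (P (a-1) (a-1)) (Icc 0 1) := P_cont hp hp
  have hint : IntervalIntegrable (fun t => P (a-1) (a-1) t * (t ^ b * (1-t) ^ b)) volume 0 1 := by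
    apply ContinuousOn.intervalIntegrable
    rw [hicc]
    exact hcontP.mul (qq_cont hb).continuousOn
  have hsym : ∀ t ∈ Icc (0:ℝ) 1, P (a-1) (a-1) (1 - t) = P (a-1) (a-1) 1 - P (a-1) (a-1) t := by
    intro t ht
    have m1 : (1:ℝ) - t ∈ Icc (0:ℝ) 1 := ⟨by linarith [ht.2], by linarith [ht.1]⟩
    have hsplit := intervalIntegral.integral_add_adjacent_intervals
      (Pint hp hp (left_mem_Icc.2 (by norm_num)) m1)
      (Pint hp hp m1 (right_mem_Icc.2 (by norm_num)))
    have h2 : ∫ s in (1-t)..1, s ^ (a-1) * (1-s) ^ (a-1) = P (a-1) (a-1) t := by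
      have h3 := intervalIntegral.integral_comp_sub_left (a := (0:ℝ)) (b := t)
        (fun s => s ^ (a-1) * (1 - s) ^ (a-1)) 1
      simp only [sub_zero] at h3
      rw [← h3]
      refine intervalIntegral.integral_congr fun x hx => ?_
      simp only [sub_sub_cancel]
      ring
    have h4 : P (a-1) (a-1) (1-t) + P (a-1) (a-1) t = P (a-1) (a-1) 1 := by
      rw [← h2]; exact hsplit
    linarith
  have key : ∫ t in (0:ℝ)..1, P (a-1) (a-1) (1-t) * ((1-t) ^ b * (1-(1-t)) ^ b)
      = ∫ t in (0:ℝ)..1, P (a-1) (a-1) t * (t ^ b * (1-t) ^ b) :=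
    integral_comp_one_sub (fun t => P (a-1) (a-1) t * (t ^ b * (1-t) ^ b))
  have key2 : ∫ t in (0:ℝ)..1, P (a-1) (a-1) (1-t) * ((1-t) ^ b * (1-(1-t)) ^ b)
      = ∫ t in (0:ℝ)..1, (P (a-1) (a-1) 1 * (t ^ b * (1-t) ^ b)
          - P (a-1) (a-1) t * (t ^ b * (1-t) ^ b)) := by
    refine intervalIntegral.integral_congr fun x hx => ?_
    rw [hicc] at hx
    rw [hsym x hx]
    simp only [sub_sub_cancel]
    ring
  have hconst : IntervalIntegrable
      (fun t => P (a-1) (a-1) 1 * (t ^ b * (1-t) ^ b)) volume 0 1 :=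
    (betaInt (by linarith) (by linarith)).const_mul _
  rw [key2, intervalIntegral.integral_sub hconst hint,
    intervalIntegral.integral_const_mul] at key
  have hqq : (∫ t in (0:ℝ)..1, t ^ b * (1-t) ^ b) = P b b 1 := rfl
  rw [hqq] at key
  linarith

lemma S5 {a b : ℝ} (ha : 0 < a) (hb : 0 < b) :
    ∫ t in (0:ℝ)..1, (t ^ (a-1) * (1-t) ^ (a-1)) * P b b t
      = 1 / 2 * (P (a-1) (a-1) 1 * P b b 1) := by
  have hp : (-1:ℝ) < a - 1 := by linarith
  have hb' : (-1:ℝ) < b := by linarith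
  have hicc : uIcc (0:ℝ) 1 = Icc 0 1 := uIcc_of_le (by norm_num)
  have h := ibp (P (a-1) (a-1)) (P b b)
    (fun t => t ^ (a-1) * (1-t) ^ (a-1)) (fun t => t ^ b * (1-t) ^ b)
    (P_cont hp hp) (P_cont hb' hb')
    (fun t ht => P_deriv hp hp ht) (fun t ht => P_deriv hb' hb' ht)
    ((betaInt hp hp).mul_continuousOn (by rw [hicc]; exact P_cont hb' hb'))
    (by
      apply ContinuousOn.intervalIntegrable
      rw [hicc]
      exact (P_cont hp hp).mul (qq_cont hb).continuousOn)
  rw [S6 ha hb] at h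
  simp only [P_zero, mul_zero, zero_mul, sub_zero] at h
  beta_reduce at h ⊢
  linarith

lemma S7 {a b : ℝ} (ha : 0 < a) (hb : 0 < b) :
    ∫ t in (0:ℝ)..1, (a * (t ^ (a-1) * (1-t) ^ a) - a * (t ^ a * (1-t) ^ (a-1))) * P b b t
      = - ∫ t in (0:ℝ)..1, t ^ (a+b) * (1-t) ^ (a+b) := by
  have hp : (-1:ℝ) < a - 1 := by linarith
  have ha' : (-1:ℝ) < a := by linarith
  have hb' : (-1:ℝ) < b := by linarith
  have hicc : uIcc (0:ℝ) 1 = Icc 0 1 := uIcc_of_le (by norm_num)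
  have h := ibp (fun t => t ^ a * (1-t) ^ a) (P b b)
    (fun t => a * (t ^ (a-1) * (1-t) ^ a) - a * (t ^ a * (1-t) ^ (a-1)))
    (fun t => t ^ b * (1-t) ^ b)
    (qq_cont ha).continuousOn (P_cont hb' hb')
    (fun t ht => qq_deriv ha ht) (fun t ht => P_deriv hb' hb' ht)
    ((((betaInt hp ha').const_mul a).sub ((betaInt ha' hp).const_mul a)).mul_continuousOn
      (by rw [hicc]; exact P_cont hb' hb'))
    (by
      apply ContinuousOn.intervalIntegrable
      rw [hicc]
      exact (qq_cont ha).continuousOn.mul (qq_cont hb).continuousOn)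
  have e1 : (1:ℝ) ^ a * (1 - (1:ℝ)) ^ a = 0 := by
    norm_num [Real.zero_rpow ha.ne']
  have e0 : (0:ℝ) ^ a * (1 - (0:ℝ)) ^ a = 0 := by
    norm_num [Real.zero_rpow ha.ne']
  rw [e1, e0] at h
  have e2 : ∫ t in (0:ℝ)..1, (t ^ a * (1-t) ^ a) * (t ^ b * (1-t) ^ b)
      = ∫ t in (0:ℝ)..1, t ^ (a+b) * (1-t) ^ (a+b) := by
    refine intervalIntegral.integral_congr fun x hx => ?_
    rw [hicc] at hx
    rw [Real.rpow_add_of_nonneg hx.1 ha.le hb.le,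
      Real.rpow_add_of_nonneg (by linarith [hx.2] : (0:ℝ) ≤ 1 - x) ha.le hb.le]
    ring
  rw [e2] at h
  beta_reduce at h ⊢
  linarith

lemma S3 {a b : ℝ} (ha : 0 < a) (hb : 0 < b) :
    ∫ t in (0:ℝ)..1, P b b t * (t ^ (a-1) * (1-t) ^ a)
      = 1 / 4 * (P (a-1) (a-1) 1 * P b b 1)
        - 1 / (2*a) * ∫ t in (0:ℝ)..1, t ^ (a+b) * (1-t) ^ (a+b) := by
  have hp : (-1:ℝ) < a - 1 := by linarith
  have ha' : (-1:ℝ) < a := by linarith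
  have hb' : (-1:ℝ) < b := by linarith
  have hicc : uIcc (0:ℝ) 1 = Icc 0 1 := uIcc_of_le (by norm_num)
  have hPcont : ContinuousOn (P b b) (uIcc (0:ℝ) 1) := by rw [hicc]; exact P_cont hb' hb'
  have int1 : IntervalIntegrable
      (fun t => 1 / 2 * ((t ^ (a-1) * (1-t) ^ (a-1)) * P b b t)) volume 0 1 :=
    ((betaInt hp hp).mul_continuousOn hPcont).const_mul _
  have int2 : IntervalIntegrable
      (fun t => 1 / (2*a) * ((a * (t ^ (a-1) * (1-t) ^ a) - a * (t ^ a * (1-t) ^ (a-1)))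
        * P b b t)) volume 0 1 :=
    ((((betaInt hp ha').const_mul a).sub ((betaInt ha' hp).const_mul a)).mul_continuousOn
      hPcont).const_mul _
  have e : ∫ t in (0:ℝ)..1, P b b t * (t ^ (a-1) * (1-t) ^ a)
      = ∫ t in (0:ℝ)..1, (1 / 2 * ((t ^ (a-1) * (1-t) ^ (a-1)) * P b b t)
          + 1 / (2*a) * ((a * (t ^ (a-1) * (1-t) ^ a) - a * (t ^ a * (1-t) ^ (a-1)))
            * P b b t)) := by
    refine intervalIntegral.integral_congr fun x hx => ?_
    rw [hicc] at hx
    rcases eq_or_lt_of_le hx.1 with h0 | h0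
    · rw [← h0]
      simp [P_zero]
    rcases eq_or_lt_of_le hx.2 with h1 | h1
    · rw [h1]
      rw [show (1:ℝ) - 1 = 0 by norm_num]
      rw [Real.zero_rpow ha.ne', Real.one_rpow, Real.one_rpow]
      field_simp
      ring
    · have e1 : x ^ a = x ^ (a-1) * x := by
        have := Real.rpow_add_one h0.ne' (a-1)
        rwa [show a - 1 + 1 = a by ring] at this
      have e2 : (1-x) ^ a = (1-x) ^ (a-1) * (1-x) := by
        have := Real.rpow_add_one (show (1:ℝ) - x ≠ 0 by intro hc; nlinarith [sub_eq_zero.1 hc]) (a-1)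
        rwa [show a - 1 + 1 = a by ring] at this
      rw [e1, e2]
      field_simp
      ring
  rw [e, intervalIntegral.integral_add int1 int2,
    intervalIntegral.integral_const_mul, intervalIntegral.integral_const_mul,
    S5 ha hb, S7 ha hb]
  ring

lemma S2 {a b : ℝ} (ha : 0 < a) (hb : 0 < b) :
    ∫ t in (0:ℝ)..1, (t ^ a * (1-t) ^ a) * P (b-1) b t
      = P a a 1 * P (b-1) b 1
        - ∫ t in (0:ℝ)..1, P a a t * (t ^ (b-1) * (1-t) ^ b) := by
  have ha' : (-1:ℝ) < a := by linarith
  have hq : (-1:ℝ) < b - 1 := by linarith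
  have hb' : (-1:ℝ) < b := by linarith
  have hicc : uIcc (0:ℝ) 1 = Icc 0 1 := uIcc_of_le (by norm_num)
  have h := ibp (P a a) (P (b-1) b)
    (fun t => t ^ a * (1-t) ^ a) (fun t => t ^ (b-1) * (1-t) ^ b)
    (P_cont ha' ha') (P_cont hq hb')
    (fun t ht => P_deriv ha' ha' ht) (fun t ht => P_deriv hq hb' ht)
    ((betaInt ha' ha').mul_continuousOn (by rw [hicc]; exact P_cont hq hb'))
    ((betaInt hq hb').continuousOn_mul (by rw [hicc]; exact P_cont ha' ha'))
  simp only [P_zero, mul_zero, zero_mul, sub_zero] at h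
  beta_reduce at h ⊢
  linarith

lemma S1 {a b : ℝ} (ha : 0 < a) (hb : 0 < b) :
    ∫ t in (0:ℝ)..1, P (a-1) a t * P (b-1) b t
      = P (a-1) a 1 * P (b-1) b 1
        - (∫ t in (0:ℝ)..1, (t ^ a * (1-t) ^ a) * P (b-1) b t)
        - ∫ t in (0:ℝ)..1, (t ^ b * (1-t) ^ b) * P (a-1) a t := by
  have hpa : (-1:ℝ) < a - 1 := by linarith
  have ha' : (-1:ℝ) < a := by linarith
  have hpb : (-1:ℝ) < b - 1 := by linarith
  have hb' : (-1:ℝ) < b := by linarith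
  have hicc : uIcc (0:ℝ) 1 = Icc 0 1 := uIcc_of_le (by norm_num)
  have hPa := P_cont hpa ha'
  have hPb := P_cont hpb hb'
  have h1 : IntervalIntegrable
      (fun t => ((t ^ (a-1) * (1-t) ^ a) * P (b-1) b t
        + P (a-1) a t * (t ^ (b-1) * (1-t) ^ b)) * t) volume 0 1 := by
    have e : (fun t : ℝ => ((t ^ (a-1) * (1-t) ^ a) * P (b-1) b t
        + P (a-1) a t * (t ^ (b-1) * (1-t) ^ b)) * t)
        = fun t : ℝ => (t ^ (a-1) * (1-t) ^ a) * (P (b-1) b t * t)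
          + (t ^ (b-1) * (1-t) ^ b) * (P (a-1) a t * t) := by
      funext t; ring
    rw [e]
    exact ((betaInt hpa ha').mul_continuousOn
        (by rw [hicc]; exact hPb.mul continuousOn_id)).add
      ((betaInt hpb hb').mul_continuousOn
        (by rw [hicc]; exact hPa.mul continuousOn_id))
  have h2 : IntervalIntegrable (fun t => (P (a-1) a t * P (b-1) b t) * 1) volume 0 1 := by
    apply ContinuousOn.intervalIntegrable
    rw [hicc]
    exact ((hPa.mul hPb).mul continuousOn_const)
  have h := ibp (fun t => P (a-1) a t * P (b-1) b t) (fun t => t)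
    (fun t => (t ^ (a-1) * (1-t) ^ a) * P (b-1) b t
      + P (a-1) a t * (t ^ (b-1) * (1-t) ^ b)) (fun _ => 1)
    ((hPa.mul hPb)) continuousOn_id
    (fun t ht => (P_deriv hpa ha' ht).mul (P_deriv hpb hb' ht))
    (fun t _ => hasDerivAt_id t) h1 h2
  simp only [P_zero, mul_zero, zero_mul, sub_zero, mul_one] at h
  have e2 : ∫ t in (0:ℝ)..1, ((t ^ (a-1) * (1-t) ^ a) * P (b-1) b t
        + P (a-1) a t * (t ^ (b-1) * (1-t) ^ b)) * t
      = ∫ t in (0:ℝ)..1, ((t ^ a * (1-t) ^ a) * P (b-1) b t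
        + (t ^ b * (1-t) ^ b) * P (a-1) a t) := by
    refine intervalIntegral.integral_congr fun x hx => ?_
    rw [hicc] at hx
    rcases eq_or_lt_of_le hx.1 with h0 | h0
    · rw [← h0]
      simp [P_zero, Real.zero_rpow ha.ne', Real.zero_rpow hb.ne']
    · have e1 : x ^ a = x ^ (a-1) * x := by
        have := Real.rpow_add_one h0.ne' (a-1)
        rwa [show a - 1 + 1 = a by ring] at this
      have e1' : x ^ b = x ^ (b-1) * x := by
        have := Real.rpow_add_one h0.ne' (b-1)
        rwa [show b - 1 + 1 = b by ring] at this
      rw [e1, e1']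
      ring
  rw [e2] at h
  have hadd : IntervalIntegrable (fun t => (t ^ a * (1-t) ^ a) * P (b-1) b t) volume 0 1 :=
    (betaInt ha' ha').mul_continuousOn (by rw [hicc]; exact hPb)
  have hadd2 : IntervalIntegrable (fun t => (t ^ b * (1-t) ^ b) * P (a-1) a t) volume 0 1 :=
    (betaInt hb' hb').mul_continuousOn (by rw [hicc]; exact hPa)
  rw [intervalIntegral.integral_add hadd hadd2] at h
  beta_reduce at h ⊢
  linarith

lemma Pbeta1 (a : ℝ) : P (a-1) a 1 = betaFn a (a+1) := by
  unfold P betaFn; simp only [add_sub_cancel_right]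

lemma Pbeta2 (a : ℝ) : P a a 1 = betaFn (a+1) (a+1) := by
  unfold P betaFn; simp only [add_sub_cancel_right]

lemma Pbeta3 (a : ℝ) : P (a-1) (a-1) 1 = betaFn a a := rfl

lemma Cbeta (c : ℝ) : (∫ t in (0:ℝ)..1, t ^ c * (1-t) ^ c) = betaFn (c+1) (c+1) := by
  unfold betaFn; simp only [add_sub_cancel_right]

end Stmt10Aux

open Stmt10Aux in
/-- `∫₀¹ I(μ,μ+1;t) I(ν,ν+1;t) dt` in closed form. -/
theorem stmt10 (m n : ℝ) (hm : 0 < m) (hn : 0 < n) :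
    ∫ t in (0:ℝ)..1, regIncBeta m (m + 1) t * regIncBeta n (n + 1) t =
      (4 * m * n + 3 * (m + n) + 2) / (2 * (2 * m + 1) * (2 * n + 1)) -
        (m + n) * betaFn (m + n + 1) (m + n + 2) /
          (m * n * betaFn m (m + 1) * betaFn n (n + 1)) := by
  have hreg : (fun t => regIncBeta m (m+1) t * regIncBeta n (n+1) t)
      = fun t => ((betaFn m (m+1))⁻¹ * (betaFn n (n+1))⁻¹) * (P (m-1) m t * P (n-1) n t) := by
    funext t
    unfold regIncBeta P
    simp only [add_sub_cancel_right]
    ring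
  rw [hreg, intervalIntegral.integral_const_mul]
  have k1 := S1 hm hn
  have k2 := S2 hm hn
  have k3 := S3 hn hm
  have k4 := S2 hn hm
  have k5 := S3 hm hn
  have hcomm : (∫ t in (0:ℝ)..1, t ^ (n+m) * (1-t) ^ (n+m))
      = ∫ t in (0:ℝ)..1, t ^ (m+n) * (1-t) ^ (m+n) := by rw [add_comm]
  rw [hcomm] at k3
  rw [Pbeta1 m, Pbeta1 n] at k1
  rw [Pbeta2 m, Pbeta1 n] at k2
  rw [Pbeta3 n, Pbeta2 m, Cbeta] at k3
  rw [Pbeta2 n, Pbeta1 m] at k4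
  rw [Pbeta3 m, Pbeta2 n, Cbeta] at k5
  have hx : 0 < betaFn m (m+1) := betaFn_pos hm (by linarith)
  have hy : 0 < betaFn n (n+1) := betaFn_pos hn (by linarith)
  have hpm : betaFn (m+1) (m+1) = m * betaFn m (m+1) / (2*m+1) := by
    have h := betaFn_succ_succ hm
    field_simp
    linarith
  have hpn : betaFn (n+1) (n+1) = n * betaFn n (n+1) / (2*n+1) := by
    have h := betaFn_succ_succ hn
    field_simp
    linarith
  have hD : betaFn (m+n+1) (m+n+1) = 2 * betaFn (m+n+1) (m+n+2) := by
    have h := betaFn_self_eq (show (0:ℝ) < m+n+1 by linarith)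
    rwa [show m+n+1+1 = m+n+2 by ring] at h
  rw [betaFn_self_eq hn, hpm, hD] at k3
  rw [betaFn_self_eq hm, hpn, hD] at k5
  rw [hpm] at k2
  rw [hpn] at k4
  rw [k1, k2, k4, k3, k5]
  have e1 : betaFn m (m+1) ≠ 0 := hx.ne'
  have e2 : betaFn n (n+1) ≠ 0 := hy.ne'
  have e3 : (2*m+1 : ℝ) ≠ 0 := by positivity
  have e4 : (2*n+1 : ℝ) ≠ 0 := by positivity
  field_simp
  ring
end

section
/- For all positive reals μ and μ', ∫₀¹ I(μ,μ';t)² dt = (1/(μ+μ')) · (μ' − 2 B(2μ, 2μ')/B(μ,μ')²). Equivalently, for independent Y, Z ~ Beta(μ,μ'), E[max{Y,Z}] = μ/(μ+μ') + 2 B(2μ,2μ')/((μ+μ') B(μ,μ')²). -/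
open MeasureTheory

open intervalIntegral Set

lemma betaIntegrand_intble {a b : ℝ} (ha : 0 < a) (hb : 0 < b) :
    IntervalIntegrable (fun x : ℝ => x ^ (a-1) * (1-x) ^ (b-1)) volume 0 1 := by
  have hleft : IntervalIntegrable (fun x : ℝ => x ^ (a-1) * (1-x) ^ (b-1)) volume 0 (1/2) := by
    apply IntervalIntegrable.mul_continuousOn
    · exact intervalIntegrable_rpow' (by linarith)
    · intro x hx
      rw [uIcc_of_le (by norm_num : (0:ℝ) ≤ 1/2)] at hx
      exact (((Real.continuousAt_rpow_const (1-x) (b-1)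
        (Or.inl (by intro h; have := hx.2; linarith))).comp
        ((continuous_const.sub continuous_id).continuousAt))).continuousWithinAt
  have hright : IntervalIntegrable (fun x : ℝ => x ^ (a-1) * (1-x) ^ (b-1)) volume (1/2) 1 := by
    apply IntervalIntegrable.continuousOn_mul (g := fun x : ℝ => x ^ (a-1))
    · have h0 : IntervalIntegrable (fun x : ℝ => x ^ (b-1)) volume 0 (1/2) :=
        intervalIntegrable_rpow' (by linarith)
      have := (h0.comp_sub_left 1).symm
      norm_num at this
      exact this
    · intro x hx
      rw [uIcc_of_le (by norm_num : (1/2:ℝ) ≤ 1)] at hx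
      exact (Real.continuousAt_rpow_const x (a-1)
        (Or.inl (by intro h; have := hx.1; linarith))).continuousWithinAt
  exact hleft.trans hright

lemma betaFn_pos {a b : ℝ} (ha : 0 < a) (hb : 0 < b) : 0 < betaFn a b := by
  apply intervalIntegral_pos_of_pos_on (betaIntegrand_intble ha hb)
  · intro x hx
    exact mul_pos (Real.rpow_pos_of_pos hx.1 _) (Real.rpow_pos_of_pos (by linarith [hx.2]) _)
  · norm_num


/-- `∫₀¹ I(μ,μ';t)² dt = (μ' − 2B(2μ,2μ')/B(μ,μ')²)/(μ+μ')`;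
equivalently, `E[max{Y,Z}] = 1 − ∫₀¹ I(μ,μ';t)² dt` has the stated closed form
for independent `Y, Z ~ Beta(μ,μ')`. -/
theorem stmt11 (m m' : ℝ) (hm : 0 < m) (hm' : 0 < m') :
    (∫ t in (0:ℝ)..1, regIncBeta m m' t ^ 2) =
      (m + m')⁻¹ * (m' - 2 * betaFn (2 * m) (2 * m') / (betaFn m m') ^ 2) ∧
    1 - ∫ t in (0:ℝ)..1, regIncBeta m m' t ^ 2 =
      m / (m + m') + 2 * betaFn (2 * m) (2 * m') / ((m + m') * (betaFn m m') ^ 2) := by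
  set B := betaFn m m' with hBdef
  set B2 := betaFn (2*m) (2*m') with hB2def
  have hB : 0 < B := betaFn_pos hm hm'
  set c : ℝ := B⁻¹ with hcdef
  set f : ℝ → ℝ := fun t => t ^ (m-1) * (1-t) ^ (m'-1) with hfdef
  set F : ℝ → ℝ := fun t => regIncBeta m m' t with hFdef
  have hFeq : ∀ t, F t = c * ∫ s in (0:ℝ)..t, f s := fun t => rfl
  have hIf : IntervalIntegrable f volume 0 1 := betaIntegrand_intble hm hm'
  have hIf2 : IntervalIntegrable (fun t : ℝ => t ^ (2*m-1) * (1-t) ^ (2*m'-1)) volume 0 1 := by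
    have := betaIntegrand_intble (by linarith : (0:ℝ) < 2*m) (by linarith : (0:ℝ) < 2*m')
    convert this using 2 with x <;> ring_nf
  -- continuity of F on Icc 0 1
  have hIccf : IntegrableOn f (uIcc 0 1) volume := by
    rw [uIcc_of_le (by norm_num : (0:ℝ) ≤ 1)]
    exact (intervalIntegrable_iff_integrableOn_Icc_of_le (by norm_num)).mp hIf
  have hFcont : ContinuousOn F (Icc 0 1) := by
    have h0 := (continuousOn_primitive_interval (a := (0:ℝ)) (b := (1:ℝ)) hIccf).const_smul c
    rw [uIcc_of_le (by norm_num : (0:ℝ) ≤ 1)] at h0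
    have hff : F = fun u => c * ∫ s in (0:ℝ)..u, f s := funext hFeq
    rw [hff]
    exact h0
  -- derivative of F inside
  have hFd : ∀ x ∈ Ioo (0:ℝ) 1, HasDerivAt F (c * f x) x := by
    intro x hx
    have hca : ContinuousAt f x := by
      refine ContinuousAt.mul (Real.continuousAt_rpow_const x (m-1) (Or.inl (ne_of_gt hx.1))) ?_
      exact ((Real.continuousAt_rpow_const (1-x) (m'-1) (Or.inl (by intro h; have := hx.2; linarith))).comp
        ((continuous_const.sub continuous_id).continuousAt))
    have hmeas : StronglyMeasurableAtFilter f (nhds x) :=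
      ⟨Ioo 0 1, Ioo_mem_nhds hx.1 hx.2,
        (continuousOn_of_forall_continuousAt (fun y hy => by
          refine ContinuousAt.mul (Real.continuousAt_rpow_const y (m-1) (Or.inl (ne_of_gt hy.1))) ?_
          exact ((Real.continuousAt_rpow_const (1-y) (m'-1) (Or.inl (by intro h; have := hy.2; linarith))).comp
            ((continuous_const.sub continuous_id).continuousAt)))).aestronglyMeasurable measurableSet_Ioo⟩
    have hsub : uIcc 0 x ⊆ uIcc (0:ℝ) 1 := by
      rw [uIcc_of_le (le_of_lt hx.1), uIcc_of_le (by norm_num : (0:ℝ) ≤ 1)]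
      exact Icc_subset_Icc le_rfl hx.2.le
    have hint : IntervalIntegrable f volume 0 x := hIf.mono_set hsub
    have hff : F = fun u => c * ∫ s in (0:ℝ)..u, f s := funext hFeq
    rw [hff]
    exact (integral_hasDerivAt_right hint hmeas hca).const_mul c
  have hF0 : F 0 = 0 := by simp [hFeq]
  have hF1 : F 1 = 1 := by
    rw [hFeq]; rw [hcdef]
    rw [show (∫ s in (0:ℝ)..1, f s) = B from rfl]
    exact inv_mul_cancel₀ (ne_of_gt hB)
  -- integrability combos
  have hIfF : IntervalIntegrable (fun t => f t * F t) volume 0 1 := by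
    apply hIf.mul_continuousOn
    rw [uIcc_of_le (by norm_num : (0:ℝ) ≤ 1)]; exact hFcont
  have hItfF : IntervalIntegrable (fun t => t * (f t * F t)) volume 0 1 :=
    hIfF.continuousOn_mul continuous_id.continuousOn
  have hIF2 : IntervalIntegrable (fun t => F t ^ 2) volume 0 1 := by
    apply ContinuousOn.intervalIntegrable
    rw [uIcc_of_le (by norm_num : (0:ℝ) ≤ 1)]; exact hFcont.pow 2
  -- E2 : ∫ f F = B / 2
  have E2 : (∫ t in (0:ℝ)..1, f t * F t) = B / 2 := by
    have key : (∫ t in (0:ℝ)..1, (2*c) * (f t * F t)) = F 1 ^ 2 - F 0 ^ 2 := by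
      apply integral_eq_sub_of_hasDeriv_right_of_le (by norm_num) (hFcont.pow 2)
      · intro x hx
        have := ((hFd x hx).pow 2).hasDerivWithinAt (s := Ioi x)
        convert this using 1; ring
      · exact hIfF.const_mul (2*c)
    rw [intervalIntegral.integral_const_mul, hF1, hF0] at key
    have hc : c = B⁻¹ := rfl
    rw [hc] at key
    field_simp at key ⊢
    linarith
  -- E1 : ∫ F² + 2c ∫ t f F = 1
  have E1 : (∫ t in (0:ℝ)..1, F t ^ 2) + 2*c*(∫ t in (0:ℝ)..1, t * (f t * F t)) = 1 := by
    have key : (∫ t in (0:ℝ)..1, (F t ^ 2 + (2*c) * (t * (f t * F t)))) =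
        1 * F 1 ^ 2 - 0 * F 0 ^ 2 := by
      apply integral_eq_sub_of_hasDeriv_right_of_le (by norm_num)
        ((continuousOn_id.mul (hFcont.pow 2)))
      · intro x hx
        have := ((hasDerivAt_id x).mul ((hFd x hx).pow 2)).hasDerivWithinAt (s := Ioi x)
        convert this using 1; simp only [id_eq, Pi.pow_apply]; ring
      · exact hIF2.add (hItfF.const_mul (2*c))
    rw [integral_add hIF2 (hItfF.const_mul (2*c)), intervalIntegral.integral_const_mul, hF1, hF0] at key
    linarith [key]
  -- E3
  have E3 : m * (∫ t in (0:ℝ)..1, f t * F t) - (m+m') * (∫ t in (0:ℝ)..1, t * (f t * F t))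
      + c * B2 = 0 := by
    have hcontg : ContinuousOn (fun t : ℝ => t ^ m * (1-t) ^ m' * F t) (Icc 0 1) := by
      refine ContinuousOn.mul (ContinuousOn.mul ?_ ?_) hFcont
      · exact fun y _ => (Real.continuousAt_rpow_const y m (Or.inr hm.le)).continuousWithinAt
      · exact fun y _ => ((Real.continuousAt_rpow_const (1-y) m' (Or.inr hm'.le)).comp
          ((continuous_const.sub continuous_id).continuousAt)).continuousWithinAt
    have hintg' : IntervalIntegrable
        (fun t : ℝ => (m - (m+m')*t) * (f t * F t) + c * (t ^ (2*m-1) * (1-t) ^ (2*m'-1)))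
        volume 0 1 :=
      (hIfF.continuousOn_mul ((continuous_const.sub (continuous_const.mul continuous_id')).continuousOn)).add
        (hIf2.const_mul c)
    have key : (∫ t in (0:ℝ)..1,
        ((m - (m+m')*t) * (f t * F t) + c * (t ^ (2*m-1) * (1-t) ^ (2*m'-1)))) =
        (1:ℝ) ^ m * (1-1) ^ m' * F 1 - (0:ℝ) ^ m * (1-0) ^ m' * F 0 := by
      apply integral_eq_sub_of_hasDeriv_right_of_le (by norm_num) hcontg
      · intro x hx
        have hx1 : (0:ℝ) < x := hx.1
        have hx2 : (0:ℝ) < 1 - x := by linarith [hx.2]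
        have d1 : HasDerivAt (fun t : ℝ => t ^ m) (m * x ^ (m-1)) x := by
          simpa [mul_comm] using Real.hasDerivAt_rpow_const (x := x) (p := m) (Or.inl (ne_of_gt hx1))
        have d2 : HasDerivAt (fun t : ℝ => (1-t) ^ m') (m' * (1-x) ^ (m'-1) * (-1)) x := by
          have h0 : HasDerivAt (fun y : ℝ => y ^ m') (m' * (1-x) ^ (m'-1)) (1-x) := by
            simpa [mul_comm] using Real.hasDerivAt_rpow_const (x := 1-x) (p := m') (Or.inl (ne_of_gt hx2))
          have h1 : HasDerivAt (fun t : ℝ => 1 - t) (-1) x := by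
            simpa using (hasDerivAt_id x).const_sub 1
          exact h0.comp x h1
        have := ((d1.mul d2).mul (hFd x hx)).hasDerivWithinAt (s := Ioi x)
        convert this using 1
        · rfl
        have e1 : x ^ m = x ^ (1:ℝ) * x ^ (m-1) := by
          rw [← Real.rpow_add hx1]; congr 1; ring
        have e2 : (1-x) ^ m' = (1-x) ^ (1:ℝ) * (1-x) ^ (m'-1) := by
          rw [← Real.rpow_add hx2]; congr 1; ring
        have e3 : x ^ (2*m-1) = x ^ m * x ^ (m-1) := by
          rw [← Real.rpow_add hx1]; congr 1; ring
        have e4 : (1-x) ^ (2*m'-1) = (1-x) ^ m' * (1-x) ^ (m'-1) := by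
          rw [← Real.rpow_add hx2]; congr 1; ring
        rw [hfdef]
        simp only [Pi.mul_apply]
        rw [e3, e4, e1, e2]; simp only [Real.rpow_one]
        ring
      · exact hintg'
    rw [integral_add (show IntervalIntegrable (fun t => (m - (m+m')*t) * (f t * F t)) volume 0 1 from
        hIfF.continuousOn_mul
        ((continuous_const.sub (continuous_const.mul continuous_id')).continuousOn)) (hIf2.const_mul c),
      intervalIntegral.integral_const_mul] at key
    have hsplit : (∫ t in (0:ℝ)..1, (m - (m+m')*t) * (f t * F t)) =
        m * (∫ t in (0:ℝ)..1, f t * F t) - (m+m') * (∫ t in (0:ℝ)..1, t * (f t * F t)) := by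
      rw [← intervalIntegral.integral_const_mul, ← intervalIntegral.integral_const_mul,
        ← integral_sub (hIfF.const_mul m) (hItfF.const_mul (m+m'))]
      apply integral_congr
      intro x _; ring
    rw [hsplit] at key
    have hz : ((1:ℝ)-1) ^ m' = 0 := by
      rw [show (1:ℝ)-1 = 0 by ring]; exact Real.zero_rpow (ne_of_gt hm')
    have hz0 : (0:ℝ) ^ m = 0 := Real.zero_rpow (ne_of_gt hm)
    rw [hz, hz0] at key
    have hB2eq : (∫ t in (0:ℝ)..1, t ^ (2*m-1) * (1-t) ^ (2*m'-1)) = B2 := rfl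
    rw [hB2eq] at key
    simp at key
    linarith [key]
  -- final algebra
  have hmm : (0:ℝ) < m + m' := by linarith
  set S := ∫ t in (0:ℝ)..1, F t ^ 2 with hSdef
  set A := ∫ t in (0:ℝ)..1, t * (f t * F t) with hAdef
  set P := ∫ t in (0:ℝ)..1, f t * F t with hPdef
  have hgoal1 : S = (m + m')⁻¹ * (m' - 2 * B2 / B ^ 2) := by
    have hc : c = B⁻¹ := rfl
    rw [hc] at E1 E3
    field_simp at E1 E3 ⊢
    linear_combination ((m+m')*B) * E1 + 2 * E3 - 2*m*B * E2
  constructor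
  · exact hgoal1
  · rw [hgoal1]
    field_simp
    ring
end
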